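/- arXiv:2011.01726 — 5 statements merged into one kernel-verified Lean document; each statement's English description precedes it below -/
import Mathlib

section
/- Let T be a finite rooted tree with t ≥ 1 leaves in which no vertex has exactly one child. Then g(T) ≤ log₂(t) + 1; in particular, the expected length of a random root-to-leaf walk in an n-vertex such tree is O(log n). -/
attribute [local instance] Classical.propDecidable

/-- A finite rooted tree, encoded by a parent function together with a depth
function recording the graph distance to the root. -/
structure FiniteRootedTree where
  V : Type
  fintypeV : Fintype V
  root : V
  parent : V → V
  depth : V → ℕ
  depth_root : depth root = 0
  depth_parent : ∀ v, v ≠ root → depth v = depth (parent v) + 1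
  root_of_depth_zero : ∀ v, depth v = 0 → v = root

attribute [instance] FiniteRootedTree.fintypeV

namespace FiniteRootedTree

/-- `u` is a child of `v`. -/
def IsChild (T : FiniteRootedTree) (u v : T.V) : Prop :=
  u ≠ T.root ∧ T.parent u = v

/-- The number of children of `v`. -/
noncomputable def numChildren (T : FiniteRootedTree) (v : T.V) : ℕ :=
  Set.ncard {u : T.V | T.IsChild u v}

/-- A leaf is a vertex with no children. -/
def IsLeaf (T : FiniteRootedTree) (v : T.V) : Prop :=
  ∀ u, ¬ T.IsChild u v

/-- The finset of leaves of `T`. -/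
noncomputable def leaves (T : FiniteRootedTree) : Finset T.V :=
  Finset.univ.filter fun v => T.IsLeaf v

/-- Probability that the random root-to-leaf walk ends at the leaf `l`:
the product of `1 / c(v)` over the vertices `v ≠ l` on the root-to-`l` path
(equivalently, over the strict ancestors `parent^[k+1] l` of `l`). -/
noncomputable def leafProb (T : FiniteRootedTree) (l : T.V) : ℝ :=
  ∏ k ∈ Finset.range (T.depth l), (1 : ℝ) / (T.numChildren (T.parent^[k + 1] l))

/-- The expected length of the random root-to-leaf walk in `T`. -/
noncomputable def g (T : FiniteRootedTree) : ℝ :=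
  ∑ l ∈ T.leaves, (T.depth l : ℝ) * T.leafProb l

/-- The number of vertices of the subtree of `T` rooted at `v`, i.e. the number
of vertices `u` having `v` as an ancestor (including `v` itself). -/
noncomputable def subtreeSize (T : FiniteRootedTree) (v : T.V) : ℕ :=
  Set.ncard {u : T.V | ∃ k : ℕ, T.parent^[k] u = v}

end FiniteRootedTree

/-- The truncations of `T₁` and `T₂` at level `h` (the rooted trees induced on
the vertices of depth at most `h`) are isomorphic as rooted trees. -/
def TruncIso (T₁ T₂ : FiniteRootedTree) (h : ℕ) : Prop :=
  ∃ φ : {v : T₁.V // T₁.depth v ≤ h} ≃ {v : T₂.V // T₂.depth v ≤ h},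
    (φ ⟨T₁.root, by simp [T₁.depth_root]⟩).val = T₂.root ∧
    ∀ u u' : {v : T₁.V // T₁.depth v ≤ h},
      T₁.IsChild u'.val u.val ↔ T₂.IsChild (φ u').val (φ u).val

/-- `InjM h U` is the set of root-respecting injective homomorphisms from the
rooted tree `U` into the complete binary tree `M_h`, whose vertices are the
boolean lists of length at most `h`, rooted at the empty list, with the
children of a list being its two one-element extensions. -/
def InjM (h : ℕ) (U : FiniteRootedTree) : Set (U.V → List Bool) :=
  {α | Function.Injective α ∧ (∀ u, (α u).length ≤ h) ∧ α U.root = [] ∧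
    ∀ u u' : U.V, U.IsChild u' u → ∃ b : Bool, α u' = α u ++ [b]}

namespace FiniteRootedTree

variable (T : FiniteRootedTree)

noncomputable def childrenFinset (v : T.V) : Finset T.V :=
  Finset.univ.filter fun u => T.IsChild u v

lemma numChildren_eq_card (v : T.V) :
    T.numChildren v = (T.childrenFinset v).card := by
  rw [numChildren, childrenFinset, Set.ncard_eq_toFinset_card']
  congr 1
  ext u
  simp

lemma depth_parent_iterate : ∀ k, ∀ v : T.V, k ≤ T.depth v →
    T.depth (T.parent^[k] v) = T.depth v - k := by
  intro k
  induction k with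
  | zero => simp
  | succ k ih =>
    intro v hk
    rw [Function.iterate_succ_apply']
    have h2 := ih v (by omega)
    have hne : T.parent^[k] v ≠ T.root := by
      intro h
      rw [h, T.depth_root] at h2
      omega
    have := T.depth_parent _ hne
    omega

lemma isChild_iterate (v : T.V) (k : ℕ) (hk : k < T.depth v) :
    T.IsChild (T.parent^[k] v) (T.parent^[k+1] v) := by
  constructor
  · intro h
    have h2 := T.depth_parent_iterate k v (le_of_lt hk)
    rw [h, T.depth_root] at h2
    omega
  · rw [Function.iterate_succ_apply']

lemma numChildren_pos_of_child {u v : T.V} (h : T.IsChild u v) :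
    0 < T.numChildren v := by
  rw [numChildren_eq_card]
  exact Finset.card_pos.mpr ⟨u, by simp [childrenFinset, h]⟩

lemma leafProb_pos (v : T.V) : 0 < T.leafProb v := by
  apply Finset.prod_pos
  intro k hk
  simp only [Finset.mem_range] at hk
  have hc := T.numChildren_pos_of_child (T.isChild_iterate v k hk)
  have : (0:ℝ) < (T.numChildren (T.parent^[k+1] v) : ℝ) := by exact_mod_cast hc
  positivity

lemma leafProb_child {u v : T.V} (h : T.IsChild u v) :
    T.leafProb u = (1 / (T.numChildren v : ℝ)) * T.leafProb v := by
  have hd : T.depth u = T.depth v + 1 := by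
    rw [T.depth_parent u h.1, h.2]
  have hiter : ∀ k, T.parent^[k+1] u = T.parent^[k] v := by
    intro k; rw [Function.iterate_succ_apply, h.2]
  rw [leafProb, leafProb, hd]
  simp only [hiter]
  rw [Finset.prod_range_succ', Function.iterate_zero_apply, mul_comm]

lemma sum_children_leafProb (v : T.V) (hv : ¬ T.IsLeaf v) :
    ∑ u ∈ T.childrenFinset v, T.leafProb u = T.leafProb v := by
  have hne : T.numChildren v ≠ 0 := by
    simp only [IsLeaf, not_forall, not_not] at hv
    obtain ⟨u, hu⟩ := hv
    exact (T.numChildren_pos_of_child hu).ne'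
  have : ∀ u ∈ T.childrenFinset v, T.leafProb u = (1 / (T.numChildren v : ℝ)) * T.leafProb v := by
    intro u hu
    exact T.leafProb_child (by simpa [childrenFinset] using hu)
  rw [Finset.sum_congr rfl this, Finset.sum_const, ← numChildren_eq_card, nsmul_eq_mul]
  have hc : ((T.numChildren v : ℝ)) ≠ 0 := by exact_mod_cast hne
  field_simp

noncomputable def lvl (n : ℕ) : Finset T.V :=
  Finset.univ.filter fun v => (T.IsLeaf v ∧ T.depth v ≤ n) ∨ T.depth v = n

lemma lvl_sum_eq_one (n : ℕ) : ∑ v ∈ T.lvl n, T.leafProb v = 1 := by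
  induction n with
  | zero =>
    have hset : T.lvl 0 = {T.root} := by
      ext v
      simp only [lvl, Finset.mem_filter, Finset.mem_univ, true_and, Finset.mem_singleton,
        Nat.le_zero]
      constructor
      · rintro (⟨_, h⟩ | h) <;> exact T.root_of_depth_zero v h
      · rintro rfl
        right; exact T.depth_root
    rw [hset, Finset.sum_singleton, leafProb, T.depth_root]
    simp
  | succ n ih =>
    set L : Finset T.V := Finset.univ.filter fun v => T.IsLeaf v ∧ T.depth v ≤ n with hL
    set B : Finset T.V := Finset.univ.filter fun v => ¬ T.IsLeaf v ∧ T.depth v = n with hB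
    set D : Finset T.V := Finset.univ.filter fun v => T.depth v = n+1 with hD
    have hAn : T.lvl n = L ∪ B := by
      ext v; simp only [lvl, hL, hB, Finset.mem_filter, Finset.mem_univ, true_and,
        Finset.mem_union]
      constructor
      · rintro (⟨hl, hd⟩ | hd)
        · exact Or.inl ⟨hl, hd⟩
        · by_cases hleaf : T.IsLeaf v
          · exact Or.inl ⟨hleaf, le_of_eq hd⟩
          · exact Or.inr ⟨hleaf, hd⟩
      · rintro (⟨hl, hd⟩ | ⟨_, hd⟩)
        · exact Or.inl ⟨hl, hd⟩
        · exact Or.inr hd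
    have hAn1 : T.lvl (n+1) = L ∪ D := by
      ext v; simp only [lvl, hL, hD, Finset.mem_filter, Finset.mem_univ, true_and,
        Finset.mem_union]
      constructor
      · rintro (⟨hl, hd⟩ | hd)
        · rcases Nat.lt_or_ge (T.depth v) (n+1) with h | h
          · exact Or.inl ⟨hl, by omega⟩
          · exact Or.inr (by omega)
        · exact Or.inr hd
      · rintro (⟨hl, hd⟩ | hd)
        · exact Or.inl ⟨hl, by omega⟩
        · exact Or.inr hd
    have hdisj1 : Disjoint L B := by
      rw [Finset.disjoint_left]
      intro v hv hv'
      simp only [hL, hB, Finset.mem_filter] at hv hv'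
      exact hv'.2.1 hv.2.1
    have hdisj2 : Disjoint L D := by
      rw [Finset.disjoint_left]
      intro v hv hv'
      simp only [hL, hD, Finset.mem_filter] at hv hv'
      omega
    rw [hAn, Finset.sum_union hdisj1] at ih
    rw [hAn1, Finset.sum_union hdisj2]
    rw [← ih]
    congr 1
    -- ∑_{D} = ∑_{B}
    have hmaps : ∀ u ∈ D, T.parent u ∈ B := by
      intro u hu
      simp only [hD, Finset.mem_filter, Finset.mem_univ, true_and] at hu
      have hur : u ≠ T.root := by
        intro h; rw [h, T.depth_root] at hu; omega
      have hdp := T.depth_parent u hur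
      simp only [hB, Finset.mem_filter, Finset.mem_univ, true_and]
      constructor
      · intro hleaf
        exact hleaf u ⟨hur, rfl⟩
      · omega
    rw [← Finset.sum_fiberwise_of_maps_to hmaps]
    apply Finset.sum_congr rfl
    intro v hv
    simp only [hB, Finset.mem_filter, Finset.mem_univ, true_and] at hv
    have hfib : D.filter (fun u => T.parent u = v) = T.childrenFinset v := by
      ext u
      rw [childrenFinset, Finset.mem_filter (p := fun u => T.IsChild u v)]
      simp only [hD, childrenFinset, Finset.mem_filter, Finset.mem_univ, true_and, IsChild]
      constructor
      · rintro ⟨hd, hp⟩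
        refine ⟨?_, hp⟩
        intro h; rw [h, T.depth_root] at hd; omega
      · rintro ⟨hr, hp⟩
        refine ⟨?_, hp⟩
        rw [T.depth_parent u hr, hp, hv.2]
    rw [hfib, T.sum_children_leafProb v hv.1]

lemma sum_leaves_leafProb_le_one : ∑ l ∈ T.leaves, T.leafProb l ≤ 1 := by
  set N := Finset.univ.sup T.depth with hN
  have hsub : T.leaves ⊆ T.lvl N := by
    intro l hl
    simp only [leaves, Finset.mem_filter, Finset.mem_univ, true_and] at hl
    simp only [lvl, Finset.mem_filter, Finset.mem_univ, true_and]
    exact Or.inl ⟨hl, Finset.le_sup (Finset.mem_univ l)⟩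
  calc ∑ l ∈ T.leaves, T.leafProb l ≤ ∑ v ∈ T.lvl N, T.leafProb v :=
        Finset.sum_le_sum_of_subset_of_nonneg hsub (fun v _ _ => (T.leafProb_pos v).le)
    _ = 1 := T.lvl_sum_eq_one N

lemma leafProb_le_pow (hone : ∀ v : T.V, T.numChildren v ≠ 1) (l : T.V) :
    T.leafProb l ≤ (1/2 : ℝ) ^ T.depth l := by
  have hrw : ((1:ℝ)/2) ^ T.depth l = ∏ _k ∈ Finset.range (T.depth l), ((1:ℝ)/2) := by
    simp
  rw [leafProb, hrw]
  apply Finset.prod_le_prod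
  · intro k hk
    simp only [Finset.mem_range] at hk
    have hc := T.numChildren_pos_of_child (T.isChild_iterate l k hk)
    have : (0:ℝ) < (T.numChildren (T.parent^[k+1] l) : ℝ) := by exact_mod_cast hc
    positivity
  · intro k hk
    simp only [Finset.mem_range] at hk
    have hc := T.numChildren_pos_of_child (T.isChild_iterate l k hk)
    have h2 : 2 ≤ T.numChildren (T.parent^[k+1] l) := by
      have := hone (T.parent^[k+1] l)
      omega
    have h2' : (2:ℝ) ≤ (T.numChildren (T.parent^[k+1] l) : ℝ) := by exact_mod_cast h2
    apply one_div_le_one_div_of_le (by norm_num) h2'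

end FiniteRootedTree

lemma log_le_div_exp_aux (y : ℝ) (hy : 0 < y) : Real.log y ≤ y / Real.exp 1 := by
  have h := Real.log_le_sub_one_of_pos (x := y / Real.exp 1) (by positivity)
  rw [Real.log_div (ne_of_gt hy) (by positivity), Real.log_exp] at h
  linarith


/-- if `T` is a finite rooted tree with `t ≥ 1` leaves in which no
vertex has exactly one child, then `g(T) ≤ log₂ t + 1`. -/
theorem stmt_0 (T : FiniteRootedTree) (ht : 1 ≤ T.leaves.card)
    (hone : ∀ v : T.V, T.numChildren v ≠ 1) :
    T.g ≤ Real.logb 2 (T.leaves.card) + 1 := by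
  set t : ℝ := (T.leaves.card : ℝ) with htdef
  have ht1 : (1:ℝ) ≤ t := by rw [htdef]; exact_mod_cast ht
  have ht0 : (0:ℝ) < t := lt_of_lt_of_le zero_lt_one ht1
  have hlog2 : (0:ℝ) < Real.log 2 := Real.log_pos one_lt_two
  have he : (0:ℝ) < Real.exp 1 := Real.exp_pos 1
  have hlogt : 0 ≤ Real.logb 2 t := Real.logb_nonneg one_lt_two ht1
  have key : ∀ l ∈ T.leaves, (T.depth l : ℝ) * T.leafProb l ≤
      T.leafProb l * Real.logb 2 t + 1 / (t * (Real.exp 1 * Real.log 2)) := by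
    intro l _
    set p := T.leafProb l with hp
    have hp0 : 0 < p := T.leafProb_pos l
    have hple : p ≤ (1/2 : ℝ) ^ T.depth l := T.leafProb_le_pow hone l
    have hd : (T.depth l : ℝ) ≤ Real.logb 2 (1/p) := by
      have h2 : (2:ℝ) ^ T.depth l ≤ 1 / p := by
        rw [le_div_iff₀ hp0]
        calc (2:ℝ) ^ T.depth l * p ≤ (2:ℝ) ^ T.depth l * (1/2)^ T.depth l := by
              apply mul_le_mul_of_nonneg_left hple (by positivity)
          _ = 1 := by rw [← mul_pow]; norm_num
      calc (T.depth l : ℝ) = Real.logb 2 ((2:ℝ) ^ T.depth l) := by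
            rw [Real.logb_pow, Real.logb_self_eq_one (by norm_num)]
            ring
        _ ≤ Real.logb 2 (1/p) :=
            Real.logb_le_logb_of_le one_lt_two (by positivity) h2
    have hsplit : Real.logb 2 (1/p) = Real.logb 2 t + Real.logb 2 (1/(t*p)) := by
      rw [← Real.logb_mul (ne_of_gt ht0) (by positivity)]
      congr 1
      field_simp
    have hln : p * Real.logb 2 (1/(t*p)) ≤ 1 / (t * (Real.exp 1 * Real.log 2)) := by
      have hy : (0:ℝ) < 1/(t*p) := by positivity
      have h1 : Real.log (1/(t*p)) ≤ (1/(t*p)) / Real.exp 1 := log_le_div_exp_aux _ hy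
      have h2 : p * (Real.log (1/(t*p)) / Real.log 2) ≤
          p * (((1/(t*p)) / Real.exp 1) / Real.log 2) := by
        gcongr
      calc p * Real.logb 2 (1/(t*p)) = p * (Real.log (1/(t*p)) / Real.log 2) := by
            rw [Real.logb]
        _ ≤ p * (((1/(t*p)) / Real.exp 1) / Real.log 2) := h2
        _ = 1 / (t * (Real.exp 1 * Real.log 2)) := by
            field_simp
    calc (T.depth l : ℝ) * p ≤ Real.logb 2 (1/p) * p := by
          apply mul_le_mul_of_nonneg_right hd hp0.le
      _ = p * Real.logb 2 t + p * Real.logb 2 (1/(t*p)) := by rw [hsplit]; ring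
      _ ≤ p * Real.logb 2 t + 1 / (t * (Real.exp 1 * Real.log 2)) := by linarith
  have hsum : T.g ≤ (∑ l ∈ T.leaves, T.leafProb l) * Real.logb 2 t
      + t * (1 / (t * (Real.exp 1 * Real.log 2))) := by
    rw [FiniteRootedTree.g]
    calc ∑ l ∈ T.leaves, (T.depth l : ℝ) * T.leafProb l
        ≤ ∑ l ∈ T.leaves, (T.leafProb l * Real.logb 2 t + 1 / (t * (Real.exp 1 * Real.log 2))) :=
          Finset.sum_le_sum key
      _ = (∑ l ∈ T.leaves, T.leafProb l) * Real.logb 2 t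
          + t * (1 / (t * (Real.exp 1 * Real.log 2))) := by
          rw [Finset.sum_add_distrib, ← Finset.sum_mul, Finset.sum_const, nsmul_eq_mul, htdef]
  have hs1 : ∑ l ∈ T.leaves, T.leafProb l ≤ 1 := T.sum_leaves_leafProb_le_one
  have hsnn : 0 ≤ ∑ l ∈ T.leaves, T.leafProb l :=
    Finset.sum_nonneg fun l _ => (T.leafProb_pos l).le
  have heln : t * (1 / (t * (Real.exp 1 * Real.log 2))) ≤ 1 := by
    have h1 : (1:ℝ) ≤ Real.exp 1 * Real.log 2 := by
      nlinarith [Real.exp_one_gt_d9, Real.log_two_gt_d9]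
    rw [mul_one_div, div_le_one (by positivity)]
    nlinarith
  calc T.g ≤ (∑ l ∈ T.leaves, T.leafProb l) * Real.logb 2 t
      + t * (1 / (t * (Real.exp 1 * Real.log 2))) := hsum
    _ ≤ 1 * Real.logb 2 t + 1 := by
        apply add_le_add _ heln
        exact mul_le_mul_of_nonneg_right hs1 hlogt
    _ = Real.logb 2 t + 1 := by ring
end

section
/- Let d ≥ 2 and let T₁ and T₂ be finite rooted trees in which every vertex has at most d children and no vertex has exactly one child, and set n = min(|V(T₁)|, |V(T₂)|). Then there exist i ∈ {1,2}, a natural number h, and a vertex v of Tᵢ of depth h such that: (a) the number of vertices of T_{3−i} of depth at most h is at most 4(d+1)·√n, and (b) either the truncations of T₁ and T₂ at level h are not isomorphic as rooted trees, or the subtree of Tᵢ rooted at v has at most 4(d+1)·√n vertices. (Such a pair (v,h) is a balanced split.) -/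
attribute [local instance] Classical.propDecidable

namespace FiniteRootedTree
variable (T : FiniteRootedTree)

lemma ne_root_of_depth_pos {u : T.V} (h : 0 < T.depth u) : u ≠ T.root := by
  intro rfl'
  rw [rfl', T.depth_root] at h
  exact Nat.lt_irrefl 0 h

lemma depth_iter (u : T.V) : ∀ k, k ≤ T.depth u → T.depth (T.parent^[k] u) = T.depth u - k := by
  intro k
  induction k with
  | zero => simp
  | succ k ih =>
    intro hk
    have hk' : k ≤ T.depth u := Nat.le_of_succ_le hk
    have h1 := ih hk'
    have hpos : 0 < T.depth (T.parent^[k] u) := by omega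
    have hne : T.parent^[k] u ≠ T.root := T.ne_root_of_depth_pos hpos
    have := T.depth_parent _ hne
    rw [Function.iterate_succ_apply']
    omega

lemma iter_depth_eq_root (u : T.V) : T.parent^[T.depth u] u = T.root := by
  apply T.root_of_depth_zero
  rw [T.depth_iter u (T.depth u) le_rfl]
  omega

/-- genuine ancestry -/
def Anc (v u : T.V) : Prop :=
  T.depth v ≤ T.depth u ∧ T.parent^[T.depth u - T.depth v] u = v

/-- v is in the forward orbit of the root -/
def InB (v : T.V) : Prop := ∃ k, T.parent^[k] T.root = v

lemma sub_eq_anc {v : T.V} (hv : ¬ T.InB v) (u : T.V) :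
    (∃ k, T.parent^[k] u = v) ↔ T.Anc v u := by
  constructor
  · rintro ⟨k, hk0⟩
    by_cases hk : k ≤ T.depth u
    · have hdk := T.depth_iter u k hk
      subst hk0
      refine ⟨by omega, ?_⟩
      rw [hdk, show T.depth u - (T.depth u - k) = k by omega]
    · exfalso
      apply hv
      refine ⟨k - T.depth u, ?_⟩
      rw [show k = (k - T.depth u) + T.depth u by omega, Function.iterate_add_apply,
        T.iter_depth_eq_root u] at hk0
      exact hk0
  · rintro ⟨h1, h2⟩
    exact ⟨T.depth u - T.depth v, h2⟩

lemma anc_child {v u : T.V} (h : T.Anc v u) (hne : u ≠ v) : ∃ w, T.IsChild w v := by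
  obtain ⟨h1, h2⟩ := h
  have hlt : T.depth v < T.depth u := by
    rcases Nat.lt_or_ge (T.depth v) (T.depth u) with h | h
    · exact h
    · exfalso; apply hne
      have h0 : T.depth u - T.depth v = 0 := by omega
      rw [h0] at h2; simpa using h2
  set j := T.depth u - T.depth v - 1 with hj
  refine ⟨T.parent^[j] u, ?_, ?_⟩
  · apply T.ne_root_of_depth_pos
    rw [T.depth_iter u j (by omega)]
    omega
  · have : T.parent (T.parent^[j] u) = T.parent^[j+1] u :=
      (Function.iterate_succ_apply' T.parent j u).symm
    rw [this, show j + 1 = T.depth u - T.depth v by omega]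
    exact h2

lemma subtree_leaf {v : T.V} (hv : ¬ T.InB v) (hleaf : T.IsLeaf v) :
    T.subtreeSize v = 1 := by
  have : {u : T.V | ∃ k : ℕ, T.parent^[k] u = v} = {v} := by
    ext u
    simp only [Set.mem_setOf_eq, Set.mem_singleton_iff]
    constructor
    · intro h
      have ha := (T.sub_eq_anc hv u).mp h
      by_contra hne
      obtain ⟨w, hw⟩ := T.anc_child ha hne
      exact hleaf w hw
    · rintro rfl; exact ⟨0, rfl⟩
  rw [subtreeSize, this, Set.ncard_singleton]

end FiniteRootedTree

namespace FiniteRootedTree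
variable (T : FiniteRootedTree)

lemma root_not_leaf (hcard : 2 ≤ Fintype.card T.V) : ¬ T.IsLeaf T.root := by
  obtain ⟨u, hu⟩ := Fintype.exists_ne_of_one_lt_card hcard T.root
  have hdu : 0 < T.depth u := by
    rcases Nat.eq_zero_or_pos (T.depth u) with h | h
    · exact absurd (T.root_of_depth_zero u h) hu
    · exact h
  intro hleaf
  set w := T.parent^[T.depth u - 1] u with hw
  have hdw : T.depth w = 1 := by
    rw [hw, T.depth_iter u (T.depth u - 1) (by omega)]; omega
  refine hleaf w ⟨T.ne_root_of_depth_pos (by omega), ?_⟩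
  have : T.parent w = T.parent^[T.depth u] u := by
    rw [hw, ← Function.iterate_succ_apply' T.parent (T.depth u - 1) u]
    congr 1; omega
  rw [this, T.iter_depth_eq_root]

lemma iter_e_period : T.parent^[T.depth (T.parent T.root) + 1] (T.parent T.root) = T.parent T.root := by
  rw [Function.iterate_succ_apply', T.iter_depth_eq_root (T.parent T.root)]

lemma orbit_e : ∀ m, ∃ j ≤ T.depth (T.parent T.root), T.parent^[m] (T.parent T.root) = T.parent^[j] (T.parent T.root) := by
  intro m
  induction m using Nat.strong_induction_on with
  | _ m ih =>
    by_cases hm : m ≤ T.depth (T.parent T.root)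
    · exact ⟨m, hm, rfl⟩
    · have h1 : T.parent^[m] (T.parent T.root)
          = T.parent^[m - (T.depth (T.parent T.root) + 1)] (T.parent T.root) := by
        calc T.parent^[m] (T.parent T.root)
            = T.parent^[(m - (T.depth (T.parent T.root) + 1)) + (T.depth (T.parent T.root) + 1)]
                (T.parent T.root) := by
              rw [show m - (T.depth (T.parent T.root) + 1) + (T.depth (T.parent T.root) + 1) = m by omega]
          _ = T.parent^[m - (T.depth (T.parent T.root) + 1)]
                (T.parent^[T.depth (T.parent T.root) + 1] (T.parent T.root)) :=
              Function.iterate_add_apply _ _ _ _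
          _ = T.parent^[m - (T.depth (T.parent T.root) + 1)] (T.parent T.root) := by
              rw [T.iter_e_period]
      obtain ⟨j, hj, hj2⟩ := ih (m - (T.depth (T.parent T.root) + 1)) (by omega)
      exact ⟨j, hj, by rw [h1, hj2]⟩

lemma InB_char {v : T.V} (h : T.InB v) :
    ∃ j ≤ T.depth (T.parent T.root), v = T.parent^[j] (T.parent T.root) := by
  obtain ⟨k, hk⟩ := h
  cases k with
  | zero =>
    refine ⟨T.depth (T.parent T.root), le_rfl, ?_⟩
    rw [T.iter_depth_eq_root (T.parent T.root)]
    exact hk.symm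
  | succ k =>
    rw [Function.iterate_succ_apply] at hk
    obtain ⟨j, hj, hj2⟩ := T.orbit_e k
    exact ⟨j, hj, by rw [← hk, hj2]⟩

lemma InB_unique_depth {v v' : T.V} (h : T.InB v) (h' : T.InB v')
    (hd : T.depth v = T.depth v') : v = v' := by
  obtain ⟨j, hj, rfl⟩ := T.InB_char h
  obtain ⟨j', hj', rfl⟩ := T.InB_char h'
  have d1 := T.depth_iter (T.parent T.root) j hj
  have d2 := T.depth_iter (T.parent T.root) j' hj'
  have : j = j' := by omega
  rw [this]

lemma InB_not_leaf {v : T.V} (h : T.InB v) (hne : v ≠ T.parent T.root)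
    (hcard : 2 ≤ Fintype.card T.V) : ¬ T.IsLeaf v := by
  obtain ⟨j, hj, rfl⟩ := T.InB_char h
  set e := T.parent T.root with he
  set D := T.depth e with hD
  rcases Nat.eq_zero_or_pos j with hj0 | hjpos
  · exact absurd (by simp [hj0] : T.parent^[j] e = e) hne
  rcases Nat.eq_zero_or_pos (T.depth (T.parent^[j] e)) with hd0 | hdpos
  · rw [T.root_of_depth_zero _ hd0]
    exact T.root_not_leaf hcard
  · intro hleaf
    set w := T.parent^[j-1] e with hw
    refine hleaf w ⟨?_, ?_⟩
    · apply T.ne_root_of_depth_pos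
      have := T.depth_iter e j hj
      rw [hw, T.depth_iter e (j-1) (by omega)]
      omega
    · rw [hw, ← Function.iterate_succ_apply' T.parent (j-1) e]
      congr 1; omega

end FiniteRootedTree

lemma ncard_setOf {α : Type} [Fintype α] (p : α → Prop) :
    Set.ncard {x | p x} = (Finset.univ.filter p).card := by
  rw [← Set.ncard_coe_finset]
  congr 1
  ext x
  simp

namespace FiniteRootedTree
variable (T : FiniteRootedTree)

noncomputable def lev (k : ℕ) : Finset T.V := Finset.univ.filter (fun v => T.depth v = k)

noncomputable def cum (h : ℕ) : Finset T.V := Finset.univ.filter (fun v => T.depth v ≤ h)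

noncomputable def childrenF (v : T.V) : Finset T.V := Finset.univ.filter (fun u => T.IsChild u v)

lemma numChildren_eq (v : T.V) : T.numChildren v = (T.childrenF v).card := by
  rw [numChildren, childrenF, ncard_setOf]

lemma lev_zero : T.lev 0 = {T.root} := by
  ext v
  simp only [lev, Finset.mem_filter, Finset.mem_univ, true_and, Finset.mem_singleton]
  exact ⟨fun h => T.root_of_depth_zero v h, fun h => by rw [h, T.depth_root]⟩

lemma cum_card (h : ℕ) : (T.cum h).card = ∑ k ∈ Finset.range (h+1), (T.lev k).card := by
  rw [← Finset.card_biUnion]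
  · congr 1
    ext v
    simp only [cum, lev, Finset.mem_filter, Finset.mem_univ, true_and, Finset.mem_biUnion,
      Finset.mem_range]
    constructor
    · intro hv; exact ⟨T.depth v, by omega, rfl⟩
    · rintro ⟨k, hk, rfl⟩; omega
  · intro i _ j _ hij
    simp only [Finset.disjoint_left, lev, Finset.mem_filter]
    rintro a ⟨_, h1⟩ ⟨_, h2⟩
    exact hij (h1 ▸ h2 ▸ rfl)

lemma lev_succ_card (k : ℕ) :
    (T.lev (k+1)).card = ∑ v ∈ T.lev k, (T.childrenF v).card := by
  rw [← Finset.card_biUnion]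
  · congr 1
    ext u
    simp only [lev, childrenF, Finset.mem_filter, Finset.mem_univ, true_and, Finset.mem_biUnion]
    constructor
    · intro hu
      have hne : u ≠ T.root := T.ne_root_of_depth_pos (by omega)
      have hdp := T.depth_parent u hne
      exact ⟨T.parent u, by omega, hne, rfl⟩
    · rintro ⟨v, hv, hne, rfl⟩
      rw [T.depth_parent u hne]; omega
  · intro i _ j _ hij
    simp only [Finset.disjoint_left, childrenF, Finset.mem_filter]
    rintro a ⟨_, _, h1⟩ ⟨_, _, h2⟩
    exact hij (h1 ▸ h2 ▸ rfl)

lemma lev_succ_le (d : ℕ) (hdeg : ∀ v : T.V, T.numChildren v ≤ d) (k : ℕ) :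
    (T.lev (k+1)).card ≤ d * (T.lev k).card := by
  rw [lev_succ_card, mul_comm]
  calc ∑ v ∈ T.lev k, (T.childrenF v).card ≤ ∑ _v ∈ T.lev k, d := by
        apply Finset.sum_le_sum
        intro v _
        rw [← T.numChildren_eq]; exact hdeg v
    _ = (T.lev k).card * d := by rw [Finset.sum_const, smul_eq_mul]

lemma lev_zero_succ (k : ℕ) (h : (T.lev k).card = 0) : (T.lev (k+1)).card = 0 := by
  rw [lev_succ_card]
  rw [Finset.card_eq_zero] at h
  rw [h, Finset.sum_empty]

end FiniteRootedTree

lemma geom_half_sum_le (n : ℕ) : ∑ j ∈ Finset.range n, ((2:ℝ)⁻¹)^j ≤ 2 := by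
  have h : ∀ m : ℕ, ∑ j ∈ Finset.range m, ((2:ℝ)⁻¹)^j = 2 - 2 * (2⁻¹)^m := by
    intro m
    induction m with
    | zero => simp
    | succ m ih => rw [Finset.sum_range_succ, ih, pow_succ]; ring
  rw [h n]
  have : (0:ℝ) ≤ 2 * (2⁻¹)^n := by positivity
  linarith

namespace FiniteRootedTree

lemma main_bound (T : FiniteRootedTree) (d H : ℕ) (hd : 2 ≤ d)
    (hdeg : ∀ v : T.V, T.numChildren v ≤ d) (hone : ∀ v : T.V, T.numChildren v ≠ 1)
    (s : ℝ) (hs : s = Real.sqrt (Fintype.card T.V))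
    (hCs : 4*(d:ℝ)+4 < s)
    (hbig : ∀ v : T.V, T.depth v ≤ H → (4*(d:ℝ)+4) * s < T.subtreeSize v)
    (hcumH : ((T.cum H).card : ℝ) ≤ (4*(d:ℝ)+4) * s) :
    ((T.cum (H+1)).card : ℝ) ≤ (4*(d:ℝ)+4) * s := by
  set C : ℝ := 4*(d:ℝ)+4 with hC
  have hd2 : (2:ℝ) ≤ (d:ℝ) := by exact_mod_cast hd
  have hC12 : (12:ℝ) ≤ C := by rw [hC]; linarith
  have hspos : (0:ℝ) < s := by linarith
  have hn : ((Fintype.card T.V : ℕ) : ℝ) = s * s := by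
    rw [hs, Real.mul_self_sqrt (Nat.cast_nonneg _)]
  have hcard2 : 2 ≤ Fintype.card T.V := by
    by_contra hlt
    push_neg at hlt
    have : ((Fintype.card T.V : ℕ) : ℝ) ≤ 1 := by exact_mod_cast Nat.lt_succ_iff.mp hlt
    nlinarith
  have hcum_succ : (T.cum (H+1)).card = (T.cum H).card + (T.lev (H+1)).card := by
    rw [T.cum_card, T.cum_card, Finset.sum_range_succ]
  by_cases hm0 : (T.lev (H+1)).card = 0
  · rw [hcum_succ, hm0]
    simpa using hcumH
  -- all levels up to H+1 are nonempty
  have hlev1 : ∀ k ≤ H+1, 1 ≤ (T.lev k).card := by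
    have haux : ∀ j k, (T.lev k).card = 0 → (T.lev (k+j)).card = 0 := by
      intro j
      induction j with
      | zero => intro k h; exact h
      | succ j ih =>
        intro k h
        have := T.lev_zero_succ k h
        have := ih (k+1) this
        rw [show k + (j+1) = (k+1) + j by omega]
        exact this
    intro k hk
    by_contra h0
    push_neg at h0
    have h0' : (T.lev k).card = 0 := by omega
    exact hm0 (by rw [show H+1 = k + (H+1-k) by omega]; exact haux _ k h0')
  -- internality
  have hint : ∀ k ≤ H, ∀ v ∈ T.lev k, v ≠ T.parent T.root → 2 ≤ (T.childrenF v).card := by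
    intro k hk v hv hne
    have hdv : T.depth v ≤ H := by
      simp only [lev, Finset.mem_filter] at hv; omega
    rcases Nat.lt_or_ge (T.childrenF v).card 2 with hlt | hge
    · exfalso
      have hnc := T.numChildren_eq v
      have h01 : (T.childrenF v).card = 0 := by
        have := hone v; omega
      have hleaf : T.IsLeaf v := by
        intro u hu
        have : u ∈ T.childrenF v := by
          simp only [childrenF, Finset.mem_filter, Finset.mem_univ, true_and]; exact hu
        rw [Finset.card_eq_zero] at h01
        rw [h01] at this
        exact absurd this (Finset.notMem_empty u)
      by_cases hB : T.InB v
      · exact T.InB_not_leaf hB hne hcard2 hleaf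
      · have h1 := T.subtree_leaf hB hleaf
        have := hbig v hdv
        rw [h1] at this
        have : C * s < 1 := by exact_mod_cast this
        nlinarith
    · exact hge
  -- claim 1 : near-doubling with deficit 2
  have c1 : ∀ k ≤ H, 2 * (T.lev k).card ≤ (T.lev (k+1)).card + 2 := by
    intro k hk
    have hsum := T.lev_succ_card k
    have h1 : ((T.lev k).erase (T.parent T.root)).card * 2 ≤ ∑ v ∈ T.lev k, (T.childrenF v).card := by
      calc ((T.lev k).erase (T.parent T.root)).card * 2
          = ∑ _v ∈ (T.lev k).erase (T.parent T.root), 2 := by rw [Finset.sum_const, smul_eq_mul]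
        _ ≤ ∑ v ∈ (T.lev k).erase (T.parent T.root), (T.childrenF v).card := by
            apply Finset.sum_le_sum
            intro v hv
            exact hint k hk v (Finset.mem_of_mem_erase hv) (Finset.ne_of_mem_erase hv)
        _ ≤ ∑ v ∈ T.lev k, (T.childrenF v).card := by
            apply Finset.sum_le_sum_of_subset (Finset.erase_subset _ _)
    have h2 : (T.lev k).card ≤ ((T.lev k).erase (T.parent T.root)).card + 1 := by
      by_cases hmem : T.parent T.root ∈ T.lev k
      · rw [Finset.card_erase_of_mem hmem]; omega
      · rw [Finset.erase_eq_of_notMem hmem]; omega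
    omega
  -- claim 2 : doubling away from depth of e
  have c2 : ∀ k ≤ H, k ≠ T.depth (T.parent T.root) → 2 * (T.lev k).card ≤ (T.lev (k+1)).card := by
    intro k hk hkd
    have hsum := T.lev_succ_card k
    have he : T.parent T.root ∉ T.lev k := by
      simp only [lev, Finset.mem_filter, Finset.mem_univ, true_and]
      omega
    have h1 : (T.lev k).card * 2 ≤ ∑ v ∈ T.lev k, (T.childrenF v).card := by
      calc (T.lev k).card * 2 = ∑ _v ∈ T.lev k, 2 := by rw [Finset.sum_const, smul_eq_mul]
        _ ≤ ∑ v ∈ T.lev k, (T.childrenF v).card := by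
            apply Finset.sum_le_sum
            intro v hv
            exact hint k hk v hv (fun h => he (h ▸ hv))
    omega
  -- monotone
  have c3 : ∀ k ≤ H, (T.lev k).card ≤ (T.lev (k+1)).card := by
    intro k hk
    have := c1 k hk
    have := hlev1 (k+1) (by omega)
    omega
  -- growth : 2^k ≤ 2 * m k
  have c4 : ∀ k ≤ H, 2^k ≤ 2 * (T.lev k).card := by
    have aux : ∀ k ≤ H, 2^k ≤ (T.lev k).card ∨
        (T.depth (T.parent T.root) < k ∧ 2^k ≤ 2 * (T.lev k).card) := by
      intro k
      induction k with
      | zero =>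
        intro _
        left
        rw [T.lev_zero, Finset.card_singleton]
        omega
      | succ k ih =>
        intro hk1
        have hk : k ≤ H := by omega
        rcases ih hk with h | ⟨hD, h⟩
        · by_cases hkd : k = T.depth (T.parent T.root)
          · right
            refine ⟨by omega, ?_⟩
            have := c3 k hk
            have : 2^k ≤ (T.lev (k+1)).card := le_trans h (c3 k hk)
            rw [pow_succ]
            omega
          · left
            have := c2 k hk hkd
            rw [pow_succ]
            omega
        · right
          refine ⟨by omega, ?_⟩
          have hkd : k ≠ T.depth (T.parent T.root) := by omega
          have := c2 k hk hkd
          rw [pow_succ]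
          omega
    intro k hk
    rcases aux k hk with h | ⟨_, h⟩
    · omega
    · exact h
  -- deficit-corrected decay : m k * 2^(H-k) ≤ m H + 2^(H-k+1)
  have c6 : ∀ j ≤ H, (T.lev (H-j)).card * 2^j ≤ (T.lev H).card + 2^(j+1) := by
    intro j
    induction j with
    | zero => intro _; simp only [Nat.sub_zero, pow_zero, pow_one, mul_one]; omega
    | succ j ih =>
      intro hj1
      have hj : j ≤ H := by omega
      have ihj := ih hj
      have hc1 := c1 (H-j-1) (by omega)
      have hstep : H - j - 1 + 1 = H - j := by omega
      rw [hstep] at hc1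
      calc (T.lev (H-(j+1))).card * 2^(j+1)
          = (2 * (T.lev (H-j-1)).card) * 2^j := by
            rw [show H-(j+1) = H-j-1 by omega, pow_succ]; ring
        _ ≤ ((T.lev (H-j)).card + 2) * 2^j := by
            apply Nat.mul_le_mul_right
            exact hc1
        _ = (T.lev (H-j)).card * 2^j + 2^(j+1) := by rw [pow_succ]; ring
        _ ≤ (T.lev H).card + 2^(j+1) + 2^(j+1) := by omega
        _ ≤ (T.lev H).card + 2^(j+1+1) := by rw [pow_succ]; omega
  -- real decay bound
  set mH : ℕ := (T.lev H).card with hmH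
  have r1 : ∀ k ≤ H, ((T.lev k).card : ℝ) ≤ (mH:ℝ) * (2⁻¹)^(H-k) + 2 := by
    intro k hk
    have h6 := c6 (H-k) (by omega)
    rw [show H - (H-k) = k by omega] at h6
    have hcast : ((T.lev k).card : ℝ) * 2^(H-k) ≤ (mH:ℝ) + 2^(H-k+1) := by exact_mod_cast h6
    have hp : (0:ℝ) < 2^(H-k) := by positivity
    have heq : ((mH:ℝ) + 2^(H-k+1))/2^(H-k) = (mH:ℝ)*(2⁻¹)^(H-k) + 2 := by
      rw [inv_pow, pow_succ]
      field_simp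
      try ring
    rw [← heq, le_div_iff₀ hp]
    exact hcast
  have r2 : ∑ k ∈ Finset.range (H+1), ((T.lev k).card : ℝ) ≤ 2*(mH:ℝ) + 2*(H+1) := by
    have hgeo : ∑ k ∈ Finset.range (H+1), ((2:ℝ)⁻¹)^(H-k) ≤ 2 := by
      have := Finset.sum_range_reflect (fun j => ((2:ℝ)⁻¹)^j) (H+1)
      simp only [Nat.add_sub_cancel] at this
      calc ∑ k ∈ Finset.range (H+1), ((2:ℝ)⁻¹)^(H-k)
          = ∑ j ∈ Finset.range (H+1), ((2:ℝ)⁻¹)^j := by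
            rw [← this]
        _ ≤ 2 := geom_half_sum_le (H+1)
    calc ∑ k ∈ Finset.range (H+1), ((T.lev k).card : ℝ)
        ≤ ∑ k ∈ Finset.range (H+1), ((mH:ℝ) * (2⁻¹)^(H-k) + 2) := by
          apply Finset.sum_le_sum
          intro k hk
          simp only [Finset.mem_range] at hk
          exact r1 k (by omega)
      _ = (mH:ℝ) * (∑ k ∈ Finset.range (H+1), ((2:ℝ)⁻¹)^(H-k)) + 2*(H+1) := by
          rw [Finset.sum_add_distrib, ← Finset.mul_sum, Finset.sum_const, Finset.card_range]
          push_cast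
          ring
      _ ≤ (mH:ℝ) * 2 + 2*(H+1) := by
          have : (0:ℝ) ≤ (mH:ℝ) := Nat.cast_nonneg _
          nlinarith
      _ = 2*(mH:ℝ) + 2*(H+1) := by ring
  -- H+1 ≤ 2 * mH
  have r4 : (H:ℝ)+1 ≤ 2*(mH:ℝ) := by
    have h1 : H < 2^H := Nat.lt_two_pow_self
    have h2 := c4 H le_rfl
    have : H + 1 ≤ 2 * mH := by omega
    exact_mod_cast this
  have r5 : (T.lev (H+1)).card ≤ d * mH := T.lev_succ_le d hdeg H
  have r3 : ((T.cum (H+1)).card : ℝ) ≤ ((d:ℝ)+6) * (mH:ℝ) := by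
    have hc : ((T.cum (H+1)).card : ℝ)
        = (∑ k ∈ Finset.range (H+1), ((T.lev k).card : ℝ)) + ((T.lev (H+1)).card : ℝ) := by
      rw [T.cum_card]
      rw [Finset.sum_range_succ]
      push_cast
      ring
    have hr5 : ((T.lev (H+1)).card : ℝ) ≤ (d:ℝ) * (mH:ℝ) := by exact_mod_cast r5
    rw [hc]
    calc (∑ k ∈ Finset.range (H+1), ((T.lev k).card : ℝ)) + ((T.lev (H+1)).card : ℝ)
        ≤ (2*(mH:ℝ) + 2*((H:ℝ)+1)) + (d:ℝ)*(mH:ℝ) := by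
          have := r2
          push_cast at this ⊢
          linarith
      _ ≤ (2*(mH:ℝ) + 2*(2*(mH:ℝ))) + (d:ℝ)*(mH:ℝ) := by linarith
      _ = ((d:ℝ)+6) * (mH:ℝ) := by ring
  -- subtree counting : mH * C ≤ s + C
  have r6 : (mH:ℝ) * C ≤ s + C := by
    set F : Finset T.V := (T.lev H).filter (fun v => ¬ T.InB v) with hF
    have hF1 : mH ≤ F.card + 1 := by
      have hsplit := Finset.card_filter_add_card_filter_not
        (s := T.lev H) (p := fun v => T.InB v)
      have hone' : ((T.lev H).filter (fun v => T.InB v)).card ≤ 1 := by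
        apply Finset.card_le_one.mpr
        intro a ha b hb
        simp only [Finset.mem_filter, lev, Finset.mem_univ, true_and] at ha hb
        exact T.InB_unique_depth ha.2 hb.2 (by omega)
      have hFeq : (Finset.filter (fun a => ¬ T.InB a) (T.lev H)).card = F.card := rfl
      omega
    have hsubF : ∀ v ∈ F, T.subtreeSize v
        = (Finset.univ.filter (fun u => T.Anc v u)).card := by
      intro v hv
      simp only [hF, Finset.mem_filter] at hv
      rw [subtreeSize]
      rw [show {u : T.V | ∃ k : ℕ, T.parent^[k] u = v} = {u : T.V | T.Anc v u} by
        ext u; exact T.sub_eq_anc hv.2 u]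
      exact ncard_setOf _
    have hdisj : ∀ v ∈ F, ∀ v' ∈ F, v ≠ v' →
        Disjoint (Finset.univ.filter (fun u => T.Anc v u))
          (Finset.univ.filter (fun u => T.Anc v' u)) := by
      intro v hv v' hv' hne
      simp only [hF, Finset.mem_filter, lev, Finset.mem_univ, true_and] at hv hv'
      rw [Finset.disjoint_left]
      intro u hu hu'
      simp only [Finset.mem_filter, Finset.mem_univ, true_and] at hu hu'
      simp only [Anc] at hu hu'
      apply hne
      rw [← hu.2, ← hu'.2, hv.1, hv'.1]
    have hsum : ∑ v ∈ F, (Finset.univ.filter (fun u => T.Anc v u)).card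
        ≤ Fintype.card T.V := by
      rw [← Finset.card_biUnion hdisj]
      rw [← Finset.card_univ]
      exact Finset.card_le_univ _
    have hlow : (F.card : ℝ) * (C * s) ≤ ((Fintype.card T.V : ℕ) : ℝ) := by
      calc (F.card : ℝ) * (C * s)
          = ∑ _v ∈ F, (C * s) := by rw [Finset.sum_const, nsmul_eq_mul]
        _ ≤ ∑ v ∈ F, ((Finset.univ.filter (fun u => T.Anc v u)).card : ℝ) := by
            apply Finset.sum_le_sum
            intro v hv
            have hv' := hv
            simp only [hF, Finset.mem_filter, lev, Finset.mem_univ, true_and] at hv'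
            have := hbig v (by omega)
            rw [hsubF v hv] at this
            linarith
        _ ≤ ((Fintype.card T.V : ℕ) : ℝ) := by exact_mod_cast hsum
    have hFC : (F.card:ℝ) * C ≤ s := by
      rw [hn] at hlow
      have h' : ((F.card:ℝ) * C) * s ≤ s * s := by nlinarith
      exact le_of_mul_le_mul_right (by linarith) hspos
    have : (mH:ℝ) ≤ (F.card:ℝ) + 1 := by exact_mod_cast hF1
    have hCpos : (0:ℝ) < C := by linarith
    nlinarith
  -- final arithmetic
  have hfin1 : ((d:ℝ)+6) ≤ C := by rw [hC]; linarith
  have hmH0 : (0:ℝ) ≤ (mH:ℝ) := Nat.cast_nonneg _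
  have hfin2 : (mH:ℝ) * C ≤ 2*s := by linarith
  calc ((T.cum (H+1)).card : ℝ) ≤ ((d:ℝ)+6) * (mH:ℝ) := r3
    _ ≤ C * (mH:ℝ) := mul_le_mul_of_nonneg_right hfin1 hmH0
    _ ≤ 2*s := by linarith [hfin2]
    _ ≤ C * s := by nlinarith

end FiniteRootedTree

namespace FiniteRootedTree
variable (T : FiniteRootedTree)

lemma ncard_depth_le (h : ℕ) : Set.ncard {u : T.V | T.depth u ≤ h} = (T.cum h).card := by
  rw [← Set.ncard_coe_finset]
  congr 1
  ext u
  simp [cum]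

lemma cum_zero_card : (T.cum 0).card = 1 := by
  have : T.cum 0 = {T.root} := by
    ext u
    simp only [cum, Finset.mem_filter, Finset.mem_univ, true_and, Finset.mem_singleton,
      Nat.le_zero]
    exact ⟨fun h => T.root_of_depth_zero u h, fun h => by rw [h, T.depth_root]⟩
  rw [this, Finset.card_singleton]

lemma cum_mono {h h' : ℕ} (hh : h ≤ h') : (T.cum h).card ≤ (T.cum h').card := by
  apply Finset.card_le_card
  intro u hu
  simp only [cum, Finset.mem_filter, Finset.mem_univ, true_and] at *
  omega

lemma depth_lt_card (u : T.V) : T.depth u < Fintype.card T.V := by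
  have hinj : Function.Injective (fun k : Fin (T.depth u + 1) => T.parent^[(k:ℕ)] u) := by
    intro a b hab
    have ha := T.depth_iter u a (by omega)
    have hb := T.depth_iter u b (by omega)
    simp only at hab
    rw [hab] at ha
    have : (a:ℕ) = (b:ℕ) := by omega
    exact Fin.ext this
  have := Fintype.card_le_of_injective _ hinj
  simpa using this

lemma subtreeSize_le_card (v : T.V) : T.subtreeSize v ≤ Fintype.card T.V := by
  rw [subtreeSize]
  calc Set.ncard {u : T.V | ∃ k : ℕ, T.parent^[k] u = v}
      ≤ Set.ncard (Set.univ : Set T.V) :=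
        Set.ncard_le_ncard (Set.subset_univ _) Set.finite_univ
    _ = Fintype.card T.V := by rw [Set.ncard_univ, Nat.card_eq_fintype_card]

end FiniteRootedTree

lemma truncIso_symm {T₁ T₂ : FiniteRootedTree} {h : ℕ} (hiso : TruncIso T₁ T₂ h) :
    TruncIso T₂ T₁ h := by
  obtain ⟨φ, hroot, hchild⟩ := hiso
  refine ⟨φ.symm, ?_, ?_⟩
  · have h1 : φ ⟨T₁.root, by simp [T₁.depth_root]⟩ = ⟨T₂.root, by simp [T₂.depth_root]⟩ :=
      Subtype.ext hroot
    rw [show (⟨T₂.root, by simp [T₂.depth_root]⟩ : {v : T₂.V // T₂.depth v ≤ h})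
        = φ ⟨T₁.root, by simp [T₁.depth_root]⟩ from h1.symm, Equiv.symm_apply_apply]
  · intro u u'
    have := hchild (φ.symm u) (φ.symm u')
    rw [Equiv.apply_symm_apply, Equiv.apply_symm_apply] at this
    exact this.symm

lemma truncIso_card {T₁ T₂ : FiniteRootedTree} {h : ℕ} (hiso : TruncIso T₁ T₂ h) :
    (T₁.cum h).card = (T₂.cum h).card := by
  obtain ⟨φ, -, -⟩ := hiso
  have := Fintype.card_congr φ
  rwa [Fintype.card_subtype, Fintype.card_subtype] at this

lemma key_lemma (d : ℕ) (hd : 2 ≤ d) (Ta Tb : FiniteRootedTree)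
    (hdega : ∀ v : Ta.V, Ta.numChildren v ≤ d)
    (honea : ∀ v : Ta.V, Ta.numChildren v ≠ 1)
    (hcard : Fintype.card Ta.V ≤ Fintype.card Tb.V) :
    ∃ h : ℕ,
      (∃ v : Ta.V, Ta.depth v = h ∧
        (Set.ncard {u : Tb.V | Tb.depth u ≤ h} : ℝ) ≤
          4 * ((d : ℝ) + 1) * Real.sqrt (min (Fintype.card Ta.V) (Fintype.card Tb.V)) ∧
        (¬ TruncIso Ta Tb h ∨
          (Ta.subtreeSize v : ℝ) ≤
            4 * ((d : ℝ) + 1) * Real.sqrt (min (Fintype.card Ta.V) (Fintype.card Tb.V)))) ∨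
      (∃ v : Tb.V, Tb.depth v = h ∧
        (Set.ncard {u : Ta.V | Ta.depth u ≤ h} : ℝ) ≤
          4 * ((d : ℝ) + 1) * Real.sqrt (min (Fintype.card Ta.V) (Fintype.card Tb.V)) ∧
        (¬ TruncIso Ta Tb h ∨
          (Tb.subtreeSize v : ℝ) ≤
            4 * ((d : ℝ) + 1) * Real.sqrt (min (Fintype.card Ta.V) (Fintype.card Tb.V)))) := by
  have hmin : min ((Fintype.card Ta.V : ℕ) : ℝ) ((Fintype.card Tb.V : ℕ) : ℝ)
      = ((Fintype.card Ta.V : ℕ) : ℝ) :=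
    min_eq_left (by exact_mod_cast hcard)
  rw [hmin]
  set n : ℕ := Fintype.card Ta.V with hndef
  set s : ℝ := Real.sqrt n with hs
  set C : ℝ := 4*(d:ℝ)+4 with hC
  have hCC : 4 * ((d:ℝ)+1) = C := by rw [hC]; ring
  rw [hCC]
  have hd2 : (2:ℝ) ≤ (d:ℝ) := by exact_mod_cast hd
  have hC12 : (12:ℝ) ≤ C := by rw [hC]; linarith
  have hn1 : 1 ≤ n := Fintype.card_pos_iff.mpr ⟨Ta.root⟩
  have hs1 : (1:ℝ) ≤ s := by
    rw [hs, show (1:ℝ) = Real.sqrt 1 by rw [Real.sqrt_one]]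
    exact Real.sqrt_le_sqrt (by exact_mod_cast hn1)
  have hspos : (0:ℝ) < s := by linarith
  have hnss : ((n:ℕ):ℝ) = s * s := by rw [hs, Real.mul_self_sqrt (Nat.cast_nonneg _)]
  by_cases h0 : (n:ℝ) ≤ C * s
  · -- the small tree is globally small : use its root at level 0
    refine ⟨0, Or.inl ⟨Ta.root, Ta.depth_root, ?_, Or.inr ?_⟩⟩
    · rw [Tb.ncard_depth_le 0, Tb.cum_zero_card]
      have : (1:ℝ) ≤ C * s := by nlinarith
      exact_mod_cast this
    · have := Ta.subtreeSize_le_card Ta.root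
      have h1 : ((Ta.subtreeSize Ta.root : ℕ) : ℝ) ≤ (n:ℝ) := by exact_mod_cast this
      linarith
  · push_neg at h0
    have hCs : C < s := by nlinarith
    -- least level where one of the cumulative counts exceeds C * s
    have hex : ∃ h : ℕ, ¬ (((Ta.cum h).card : ℝ) ≤ C * s ∧ ((Tb.cum h).card : ℝ) ≤ C * s) := by
      refine ⟨n, fun hcon => ?_⟩
      have hall : Ta.cum n = Finset.univ := by
        ext u
        simp only [FiniteRootedTree.cum, Finset.mem_filter, Finset.mem_univ, true_and]
        have h1 : Ta.depth u < n := by rw [hndef]; exact Ta.depth_lt_card u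
        simpa using Nat.le_of_lt h1
      have : ((Ta.cum n).card : ℝ) = (n:ℝ) := by rw [hall, Finset.card_univ]
      rw [this] at hcon
      linarith [hcon.1]
    classical
    have h₀spec := Nat.find_spec hex
    have hone_le : (1:ℝ) ≤ C * s := by nlinarith
    have hP0 : ¬ ¬ ((((Ta.cum 0).card : ℝ) ≤ C * s) ∧ (((Tb.cum 0).card : ℝ) ≤ C * s)) := by
      simp only [not_not]
      rw [Ta.cum_zero_card, Tb.cum_zero_card]
      push_cast
      exact ⟨hone_le, hone_le⟩
    have hpos : 0 < Nat.find hex := by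
      rcases Nat.eq_zero_or_pos (Nat.find hex) with h | h
      · exact absurd (h ▸ h₀spec) hP0
      · exact h
    set H : ℕ := Nat.find hex - 1 with hHdef
    have hPH := Nat.find_min hex (m := H) (by omega)
    have hPH1 : ¬ ((((Ta.cum (H+1)).card : ℝ) ≤ C * s)
        ∧ (((Tb.cum (H+1)).card : ℝ) ≤ C * s)) := by
      rw [show H+1 = Nat.find hex by omega]
      exact h₀spec
    obtain ⟨hcumA, hcumB⟩ := not_not.mp hPH
    by_cases h2a : ∃ v : Ta.V, Ta.depth v ≤ H ∧ (Ta.subtreeSize v : ℝ) ≤ C * s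
    · obtain ⟨v, hvH, hvs⟩ := h2a
      refine ⟨Ta.depth v, Or.inl ⟨v, rfl, ?_, Or.inr hvs⟩⟩
      rw [Tb.ncard_depth_le]
      have hmono := Tb.cum_mono hvH
      have hcast : ((Tb.cum (Ta.depth v)).card : ℝ) ≤ ((Tb.cum H).card : ℝ) := by
        exact_mod_cast hmono
      linarith
    · push_neg at h2a
      have hA : ((Ta.cum (H+1)).card : ℝ) ≤ C * s :=
        Ta.main_bound d H hd hdega honea s hs hCs (fun v hv => h2a v hv) hcumA
      have hB : C * s < ((Tb.cum (H+1)).card : ℝ) := by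
        by_contra hb
        push_neg at hb
        exact hPH1 ⟨hA, hb⟩
      have hniso : ¬ TruncIso Ta Tb (H+1) := by
        intro hiso
        have hcc := truncIso_card hiso
        have : ((Ta.cum (H+1)).card : ℝ) = ((Tb.cum (H+1)).card : ℝ) := by exact_mod_cast hcc
        linarith
      have hvex : ∃ v : Tb.V, Tb.depth v = H+1 := by
        by_contra hno
        push_neg at hno
        have hcc : Tb.cum (H+1) = Tb.cum H := by
          ext u
          simp only [FiniteRootedTree.cum, Finset.mem_filter, Finset.mem_univ, true_and]
          have := hno u
          omega
        rw [hcc] at hB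
        linarith
      obtain ⟨v, hv⟩ := hvex
      refine ⟨H+1, Or.inr ⟨v, hv, ?_, Or.inl hniso⟩⟩
      rw [Ta.ncard_depth_le]
      exact hA


/-- existence of a balanced split. -/
theorem stmt_1 (d : ℕ) (hd : 2 ≤ d) (T₁ T₂ : FiniteRootedTree)
    (hdeg₁ : ∀ v : T₁.V, T₁.numChildren v ≤ d)
    (hdeg₂ : ∀ v : T₂.V, T₂.numChildren v ≤ d)
    (hone₁ : ∀ v : T₁.V, T₁.numChildren v ≠ 1)
    (hone₂ : ∀ v : T₂.V, T₂.numChildren v ≠ 1) :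
    ∃ h : ℕ,
      (∃ v : T₁.V, T₁.depth v = h ∧
        (Set.ncard {u : T₂.V | T₂.depth u ≤ h} : ℝ) ≤
          4 * ((d : ℝ) + 1) * Real.sqrt (min (Fintype.card T₁.V) (Fintype.card T₂.V)) ∧
        (¬ TruncIso T₁ T₂ h ∨
          (T₁.subtreeSize v : ℝ) ≤
            4 * ((d : ℝ) + 1) * Real.sqrt (min (Fintype.card T₁.V) (Fintype.card T₂.V)))) ∨
      (∃ v : T₂.V, T₂.depth v = h ∧
        (Set.ncard {u : T₁.V | T₁.depth u ≤ h} : ℝ) ≤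
          4 * ((d : ℝ) + 1) * Real.sqrt (min (Fintype.card T₁.V) (Fintype.card T₂.V)) ∧
        (¬ TruncIso T₁ T₂ h ∨
          (T₂.subtreeSize v : ℝ) ≤
            4 * ((d : ℝ) + 1) * Real.sqrt (min (Fintype.card T₁.V) (Fintype.card T₂.V)))) := by
  rcases le_total (Fintype.card T₁.V) (Fintype.card T₂.V) with hle | hle
  · exact key_lemma d hd T₁ T₂ hdeg₁ hone₁ hle
  · obtain ⟨h, hres⟩ := key_lemma d hd T₂ T₁ hdeg₂ hone₂ hle
    have hminc : min ((Fintype.card T₂.V : ℕ) : ℝ) ((Fintype.card T₁.V : ℕ) : ℝ)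
        = min ((Fintype.card T₁.V : ℕ) : ℝ) ((Fintype.card T₂.V : ℕ) : ℝ) := min_comm _ _
    refine ⟨h, ?_⟩
    rcases hres with ⟨v, h1, h2, h3⟩ | ⟨v, h1, h2, h3⟩
    · right
      rw [hminc] at h2 h3
      refine ⟨v, h1, h2, ?_⟩
      rcases h3 with h3 | h3
      · exact Or.inl (fun hiso => h3 (truncIso_symm hiso))
      · exact Or.inr h3
    · left
      rw [hminc] at h2 h3
      refine ⟨v, h1, h2, ?_⟩
      rcases h3 with h3 | h3
      · exact Or.inl (fun hiso => h3 (truncIso_symm hiso))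
      · exact Or.inr h3
end

section
/- Let T be a finite rooted tree with n vertices and let h be a natural number such that every vertex of T of depth less than h has at least two children (in particular, T has no leaf of depth less than h). Suppose the number s of vertices of T of depth at most h satisfies s > 4·√n. Then 4·|{v : v has depth h and the subtree of T rooted at v has more than 2·√n vertices}| ≤ |{v : v has depth h}|; that is, at least three quarters of the vertices at depth h root subtrees with at most 2·√n vertices. -/
attribute [local instance] Classical.propDecidable

namespace FiniteRootedTree

lemma myNcardFilter {α : Type} [Fintype α] (p : α → Prop) [DecidablePred p] :
    Set.ncard {x | p x} = (Finset.univ.filter p).card := by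
  rw [Set.ncard_eq_toFinset_card']
  congr 1
  ext x
  simp

lemma ancOrRoot (T : FiniteRootedTree) :
    ∀ (k : ℕ) (u v : T.V), T.parent^[k] u = v → v ≠ T.root →
      T.depth u = T.depth v + k ∨ ∃ j, j < k ∧ T.parent^[j] u = T.root := by
  intro k
  induction k with
  | zero =>
    intro u v hv _
    left
    simp only [Function.iterate_zero, id_eq] at hv
    rw [hv]
    simp
  | succ k ih =>
    intro u v hv hvr
    by_cases hu : u = T.root
    · exact Or.inr ⟨0, Nat.succ_pos _, by simpa using hu⟩
    · rw [Function.iterate_succ_apply] at hv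
      rcases ih (T.parent u) v hv hvr with hd | ⟨j, hj, hjr⟩
      · left
        have := T.depth_parent u hu
        omega
      · exact Or.inr ⟨j + 1, by omega, by rw [Function.iterate_succ_apply]; exact hjr⟩

lemma rootReachUnique (T : FiniteRootedTree) (h : ℕ) (hh : 1 ≤ h) :
    ∀ (m : ℕ) (v : T.V), T.parent^[m] T.root = v → T.depth v = h →
      v = T.parent^[T.depth (T.parent T.root) - h] (T.parent T.root) := by
  intro m
  induction m using Nat.strong_induction_on with
  | _ m ih =>
    intro v hv hdv
    have hvr : v ≠ T.root := by
      intro e; rw [e, T.depth_root] at hdv; omega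
    match m, ih, hv with
    | 0, _, hv =>
      simp only [Function.iterate_zero, id_eq] at hv
      exact absurd hv.symm hvr
    | k + 1, ih, hv =>
      have hv2 := hv
      rw [Function.iterate_succ_apply] at hv2
      rcases T.ancOrRoot k (T.parent T.root) v hv2 hvr with hd | ⟨j, hj, hjr⟩
      · have hk : T.depth (T.parent T.root) - h = k := by omega
        rw [hk]
        exact hv2.symm
      · have hr1 : T.parent^[j + 1] T.root = T.root := by
          rw [Function.iterate_succ_apply]; exact hjr
        have hv' : T.parent^[k - j] T.root = v := by
          calc T.parent^[k - j] T.root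
              = T.parent^[k - j] (T.parent^[j + 1] T.root) := by rw [hr1]
            _ = T.parent^[(k - j) + (j + 1)] T.root :=
                (Function.iterate_add_apply _ _ _ _).symm
            _ = T.parent^[k + 1] T.root := by congr 1; omega
            _ = v := hv
        exact ih (k - j) (by omega) v hv' hdv

end FiniteRootedTree

/-- if every vertex of depth `< h` has at least two children and the
number of vertices of depth at most `h` exceeds `4√n`, then at least three quarters
of the vertices at depth `h` root subtrees with at most `2√n` vertices. -/
theorem stmt_2 (T : FiniteRootedTree) (h : ℕ)
    (hbranch : ∀ v : T.V, T.depth v < h → 2 ≤ T.numChildren v)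
    (hs : (4 : ℝ) * Real.sqrt (Fintype.card T.V) <
      (Set.ncard {v : T.V | T.depth v ≤ h} : ℝ)) :
    4 * Set.ncard {v : T.V | T.depth v = h ∧
        (2 : ℝ) * Real.sqrt (Fintype.card T.V) < (T.subtreeSize v : ℝ)} ≤
      Set.ncard {v : T.V | T.depth v = h} := by
  classical
  set n := Fintype.card T.V with hn
  have hn1 : 1 ≤ n := Fintype.card_pos_iff.mpr ⟨T.root⟩
  set m := Real.sqrt n with hm
  have hm0 : 0 ≤ m := Real.sqrt_nonneg _
  have hmm : m * m = (n : ℝ) := Real.mul_self_sqrt (by positivity)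
  have hm1 : (1 : ℝ) ≤ m := by
    have h1 : ((1 : ℕ) : ℝ) ≤ (n : ℝ) := by exact_mod_cast hn1
    have := Real.sqrt_le_sqrt (by exact_mod_cast h1 : (1:ℝ) ≤ (n:ℝ))
    rwa [Real.sqrt_one] at this
  rw [FiniteRootedTree.myNcardFilter] at hs
  rw [FiniteRootedTree.myNcardFilter, FiniteRootedTree.myNcardFilter]
  set L : ℕ → Finset T.V := fun k => Finset.univ.filter (fun v => T.depth v = k) with hL
  set S : Finset T.V := Finset.univ.filter (fun v : T.V => T.depth v ≤ h) with hS
  -- s ≤ n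
  have hsn : (S.card : ℝ) ≤ (n : ℝ) := by
    have : S.card ≤ n := by rw [hn, ← Finset.card_univ]; exact Finset.card_le_univ S
    exact_mod_cast this
  have hm45 : 4 * m < m * m := by linarith
  have hm4 : 4 < m := by
    by_contra hcon
    push_neg at hcon
    nlinarith
  -- h ≥ 1
  rcases Nat.eq_zero_or_pos h with h0 | hh
  · exfalso
    subst h0
    have hS1 : S.card = 1 := by
      have he : S = {T.root} := by
        ext v
        simp only [hS, Finset.mem_filter, Finset.mem_univ, true_and,
          Finset.mem_singleton, Nat.le_zero]
        constructor
        · exact T.root_of_depth_zero v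
        · rintro rfl; exact T.depth_root
      rw [he]; simp
    rw [hS1] at hs
    norm_num at hs
    linarith
  -- level doubling
  have hlevel : ∀ k, k < h → 2 * (L k).card ≤ (L (k + 1)).card := by
    intro k hk
    set f : T.V → Finset T.V := fun v => Finset.univ.filter (fun u => T.IsChild u v) with hf
    have hdisj : ∀ v ∈ L k, ∀ v' ∈ L k, v ≠ v' → Disjoint (f v) (f v') := by
      intro v _ v' _ hvv'
      rw [Finset.disjoint_left]
      intro u h1 h2
      simp only [hf, Finset.mem_filter, Finset.mem_univ, true_and] at h1 h2
      exact hvv' (h1.2 ▸ h2.2)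
    have hsub : (L k).biUnion f ⊆ L (k + 1) := by
      intro u hu
      simp only [Finset.mem_biUnion, hf, hL, Finset.mem_filter, Finset.mem_univ,
        true_and] at hu ⊢
      obtain ⟨v, hv, hc⟩ := hu
      have hd := T.depth_parent u hc.1
      rw [hc.2] at hd
      omega
    calc 2 * (L k).card = ∑ _v ∈ L k, 2 := by rw [Finset.sum_const]; ring
      _ ≤ ∑ v ∈ L k, (f v).card := by
          apply Finset.sum_le_sum
          intro v hv
          have hd : T.depth v < h := by
            simp only [hL, Finset.mem_filter, Finset.mem_univ, true_and] at hv
            omega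
          have h2 := hbranch v hd
          rwa [FiniteRootedTree.numChildren, FiniteRootedTree.myNcardFilter] at h2
      _ = ((L k).biUnion f).card := (Finset.card_biUnion hdisj).symm
      _ ≤ (L (k + 1)).card := Finset.card_le_card hsub
  -- geometric decay of levels
  have hgeom : ∀ d, d ≤ h → ((L (h - d)).card : ℝ) ≤ ((L h).card : ℝ) * (1 / 2) ^ d := by
    intro d
    induction d with
    | zero => intro _; simp
    | succ d ih =>
      intro hd
      have h2 := hlevel (h - (d + 1)) (by omega)
      have h3 : h - (d + 1) + 1 = h - d := by omega
      rw [h3] at h2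
      have h4 := ih (by omega)
      have h2' : 2 * ((L (h - (d + 1))).card : ℝ) ≤ ((L (h - d)).card : ℝ) := by
        exact_mod_cast h2
      rw [pow_succ]
      nlinarith [pow_nonneg (by norm_num : (0:ℝ) ≤ 1/2) d]
  -- S.card as a sum over levels
  have hSsum : S.card = ∑ k ∈ Finset.range (h + 1), (L k).card := by
    have he : S = (Finset.range (h + 1)).biUnion L := by
      ext v
      simp only [hS, hL, Finset.mem_filter, Finset.mem_univ, true_and,
        Finset.mem_biUnion, Finset.mem_range, Nat.lt_succ_iff]
      constructor
      · intro hv; exact ⟨T.depth v, hv, rfl⟩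
      · rintro ⟨k, hk, rfl⟩; exact hk
    rw [he, Finset.card_biUnion]
    intro k _ k' _ hkk'
    rw [Function.onFun, Finset.disjoint_left]
    intro v h1 h2
    simp only [hL, Finset.mem_filter, Finset.mem_univ, true_and] at h1 h2
    exact hkk' (h1 ▸ h2 ▸ rfl)
  -- S.card ≤ 2 * (L h).card
  have hS2D : (S.card : ℝ) ≤ 2 * ((L h).card : ℝ) := by
    have h1 : (S.card : ℝ) = ∑ k ∈ Finset.range (h + 1), ((L k).card : ℝ) := by
      rw [hSsum]; push_cast; ring
    have h2 : ∀ k ∈ Finset.range (h + 1),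
        ((L k).card : ℝ) ≤ ((L h).card : ℝ) * (1 / 2) ^ (h - k) := by
      intro k hk
      rw [Finset.mem_range, Nat.lt_succ_iff] at hk
      have := hgeom (h - k) (by omega)
      rwa [Nat.sub_sub_self hk] at this
    have h3 : (S.card : ℝ) ≤ ∑ k ∈ Finset.range (h + 1), ((L h).card : ℝ) * (1 / 2) ^ (h - k) :=
      h1 ▸ Finset.sum_le_sum h2
    have h4 : ∑ k ∈ Finset.range (h + 1), ((L h).card : ℝ) * (1 / 2) ^ (h - k)
        = ((L h).card : ℝ) * ∑ j ∈ Finset.range (h + 1), (1 / 2 : ℝ) ^ j := by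
      rw [Finset.mul_sum]
      rw [← Finset.sum_range_reflect (fun j => ((L h).card : ℝ) * (1 / 2 : ℝ) ^ j) (h + 1)]
      apply Finset.sum_congr rfl
      intro k hk
      rw [Finset.mem_range, Nat.lt_succ_iff] at hk
      congr 2
    have h5 : ∑ j ∈ Finset.range (h + 1), (1 / 2 : ℝ) ^ j ≤ 2 := by
      rw [geom_sum_eq (by norm_num : (1 / 2 : ℝ) ≠ 1)]
      have hp : (0 : ℝ) ≤ (1 / 2 : ℝ) ^ (h + 1) := by positivity
      rw [div_le_iff_of_neg (by norm_num : (1 / 2 : ℝ) - 1 < 0)]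
      linarith
    have hD0 : (0 : ℝ) ≤ ((L h).card : ℝ) := by positivity
    calc (S.card : ℝ) ≤ ((L h).card : ℝ) * ∑ j ∈ Finset.range (h + 1), (1 / 2 : ℝ) ^ j := by
          rw [← h4]; exact h3
      _ ≤ ((L h).card : ℝ) * 2 := by nlinarith
      _ = 2 * ((L h).card : ℝ) := by ring
  -- split S into depth < h and depth = h
  set Dlt : Finset T.V := Finset.univ.filter (fun v : T.V => T.depth v < h) with hDlt
  set Dge : Finset T.V := Finset.univ.filter (fun v : T.V => h ≤ T.depth v) with hDge
  have hsplit : S.card = Dlt.card + (L h).card := by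
    rw [← Finset.card_union_of_disjoint]
    · congr 1
      ext v
      simp only [hS, hDlt, hL, Finset.mem_union, Finset.mem_filter, Finset.mem_univ, true_and]
      omega
    · rw [Finset.disjoint_left]
      intro v h1 h2
      simp only [hDlt, hL, Finset.mem_filter, Finset.mem_univ, true_and] at h1 h2
      omega
  have huniv : Dlt.card + Dge.card = n := by
    have h1 : Dge = Finset.univ.filter (fun v : T.V => ¬ T.depth v < h) := by
      ext v
      simp only [hDge, Finset.mem_filter, Finset.mem_univ, true_and, not_lt]
    rw [h1, hn, ← Finset.card_univ, hDlt]
    exact Finset.card_filter_add_card_filter_not (fun v : T.V => T.depth v < h)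
  -- the big set and its split
  set Bfin : Finset T.V := Finset.univ.filter
    (fun v : T.V => T.depth v = h ∧ 2 * m < (T.subtreeSize v : ℝ)) with hB
  set C : T.V → Prop := fun v => ∃ j, T.parent^[j] T.root = v with hC
  set B1 : Finset T.V := Bfin.filter (fun v => ¬ C v) with hB1
  have hBsplit : Bfin.card ≤ B1.card + 1 := by
    have h2 : (Bfin.filter C).card ≤ 1 := by
      apply Finset.card_le_one.mpr
      intro a ha b hb
      simp only [hB, hC, Finset.mem_filter, Finset.mem_univ, true_and] at ha hb
      obtain ⟨⟨hda, _⟩, ja, hja⟩ := ha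
      obtain ⟨⟨hdb, _⟩, jb, hjb⟩ := hb
      rw [T.rootReachUnique h hh ja a hja hda, T.rootReachUnique h hh jb b hjb hdb]
    have hcup : B1 ∪ Bfin.filter C = Bfin := by
      rw [hB1, Finset.union_comm]
      exact Finset.filter_union_filter_not_eq C Bfin
    calc Bfin.card = (B1 ∪ Bfin.filter C).card := by rw [hcup]
      _ ≤ B1.card + (Bfin.filter C).card := Finset.card_union_le _ _
      _ ≤ B1.card + 1 := by omega
  -- real subtrees
  set R : T.V → Finset T.V := fun v => Finset.univ.filter
    (fun u => h ≤ T.depth u ∧ T.parent^[T.depth u - h] u = v) with hR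
  have hsubR : ∀ v ∈ B1, (T.subtreeSize v : ℝ) ≤ ((R v).card : ℝ) := by
    intro v hv
    simp only [hB1, hB, hC, Finset.mem_filter, Finset.mem_univ, true_and] at hv
    obtain ⟨⟨hdv, _⟩, hnc⟩ := hv
    have hvr : v ≠ T.root := by intro e; rw [e, T.depth_root] at hdv; omega
    have hle : T.subtreeSize v ≤ (R v).card := by
      rw [FiniteRootedTree.subtreeSize, FiniteRootedTree.myNcardFilter]
      apply Finset.card_le_card
      intro u hu
      simp only [hR, Finset.mem_filter, Finset.mem_univ, true_and] at hu ⊢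
      obtain ⟨k, hk⟩ := hu
      rcases T.ancOrRoot k u v hk hvr with hd | ⟨j, hj, hjr⟩
      · refine ⟨by omega, ?_⟩
        have he : T.depth u - h = k := by omega
        rw [he]; exact hk
      · exfalso
        apply hnc
        refine ⟨k - j, ?_⟩
        calc T.parent^[k - j] T.root = T.parent^[k - j] (T.parent^[j] u) := by rw [hjr]
          _ = T.parent^[(k - j) + j] u := (Function.iterate_add_apply _ _ _ _).symm
          _ = T.parent^[k] u := by congr 1; omega
          _ = v := hk
    exact_mod_cast hle
  have hsumR : ∑ v ∈ B1, (R v).card ≤ Dge.card := by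
    have hdisj : ∀ v ∈ B1, ∀ v' ∈ B1, v ≠ v' → Disjoint (R v) (R v') := by
      intro v _ v' _ hvv'
      rw [Finset.disjoint_left]
      intro u h1 h2
      simp only [hR, Finset.mem_filter, Finset.mem_univ, true_and] at h1 h2
      exact hvv' (h1.2 ▸ h2.2)
    rw [← Finset.card_biUnion hdisj]
    apply Finset.card_le_card
    intro u hu
    simp only [Finset.mem_biUnion, hR, hDge, Finset.mem_filter, Finset.mem_univ,
      true_and] at hu ⊢
    obtain ⟨v, _, h1, _⟩ := hu
    exact h1
  have hkey : (B1.card : ℝ) * (2 * m) ≤ (Dge.card : ℝ) := by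
    calc (B1.card : ℝ) * (2 * m) = ∑ _v ∈ B1, 2 * m := by rw [Finset.sum_const]; simp
      _ ≤ ∑ v ∈ B1, ((R v).card : ℝ) := by
          apply Finset.sum_le_sum
          intro v hv
          have h1 := hsubR v hv
          have h2 : 2 * m < (T.subtreeSize v : ℝ) := by
            simp only [hB1, hB, Finset.mem_filter, Finset.mem_univ, true_and] at hv
            exact hv.1.2
          linarith
      _ = ((∑ v ∈ B1, (R v).card : ℕ) : ℝ) := by push_cast; ring
      _ ≤ (Dge.card : ℝ) := by exact_mod_cast hsumR
  -- final arithmetic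
  have c1 : (Bfin.card : ℝ) ≤ (B1.card : ℝ) + 1 := by exact_mod_cast hBsplit
  have c2 : (S.card : ℝ) = (Dlt.card : ℝ) + ((L h).card : ℝ) := by exact_mod_cast hsplit
  have c3 : (Dlt.card : ℝ) + (Dge.card : ℝ) = (n : ℝ) := by exact_mod_cast huniv
  have final : (4 : ℝ) * (Bfin.card : ℝ) ≤ ((L h).card : ℝ) := by
    have hmpos : (0 : ℝ) < m := by linarith
    rw [← mul_le_mul_iff_of_pos_right hmpos]
    nlinarith [mul_le_mul_of_nonneg_right c1 hm0, hkey,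
      mul_nonneg (by linarith : (0:ℝ) ≤ 2 * ((L h).card : ℝ) - (S.card : ℝ))
        (by linarith : (0:ℝ) ≤ m - 2),
      mul_nonneg (by linarith : (0:ℝ) ≤ (S.card : ℝ) - 4 * m)
        (by linarith : (0:ℝ) ≤ m - 2)]
  have goal_nat : 4 * Bfin.card ≤ (L h).card := by exact_mod_cast final
  exact goal_nat
end

section
/- Let h be a natural number and let U₁ and U₂ be finite rooted trees with a and b leaves respectively. Then 2^h · |{(α₁, α₂) ∈ Inj(U₁, M_h) × Inj(U₂, M_h) : there exists a Boolean list ℓ of length h with ℓ ∈ α₁(V(U₁)) ∩ α₂(V(U₂))}| ≤ a · b · |Inj(U₁, M_h)| · |Inj(U₂, M_h)|. Equivalently, for α₁ and α₂ chosen independently and uniformly at random (when both sets are nonempty), the probability that the images α₁(V(U₁)) and α₂(V(U₂)) share a leaf of M_h is at most a·b/2^h. -/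
attribute [local instance] Classical.propDecidable

namespace Stmt3Aux

lemma xor_xor_cancel (a b : Bool) : xor (xor a b) b = a := by cases a <;> cases b <;> rfl

lemma zip_xor_invol : ∀ (m c : List Bool), m.length ≤ c.length →
    List.zipWith xor (List.zipWith xor m c) c = m
  | [], _, _ => by simp
  | _ :: _, [], h => by simp at h
  | a :: m, b :: c, h => by
    simp only [List.zipWith, xor_xor_cancel, List.cons.injEq, true_and]
    exact zip_xor_invol m c (by simpa using h)

lemma zip_xor_self : ∀ (l l' : List Bool), l.length = l'.length →
    List.zipWith xor l (List.zipWith xor l l') = l'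
  | [], [], _ => by simp
  | [], _ :: _, h => by simp at h
  | _ :: _, [], h => by simp at h
  | a :: l, b :: l', h => by
    simp only [List.zipWith, xor_xor_cancel, List.cons.injEq]
    constructor
    · cases a <;> cases b <;> rfl
    · exact zip_xor_self l l' (by simpa using h)

lemma zip_xor_append : ∀ (m c : List Bool) (b : Bool), m.length < c.length →
    ∃ b' : Bool, List.zipWith xor (m ++ [b]) c = List.zipWith xor m c ++ [b']
  | [], [], b, h => by simp at h
  | [], a :: c, b, _ => ⟨xor b a, by simp⟩
  | _ :: _, [], b, h => by simp at h
  | a :: m, x :: c, b, h => by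
    obtain ⟨b', hb'⟩ := zip_xor_append m c b (by simpa using h)
    exact ⟨b', by simp only [List.cons_append, List.zipWith, List.append_eq, hb']⟩

lemma length_zip_xor (m c : List Bool) (h : m.length ≤ c.length) :
    (List.zipWith xor m c).length = m.length := by
  simp [List.length_zipWith]; omega

/-- the finset of boolean lists of length `h` -/
noncomputable def Lh (h : ℕ) : Finset (List Bool) :=
  (Finset.univ : Finset (Fin h → Bool)).image List.ofFn

lemma mem_Lh {h : ℕ} {l : List Bool} : l ∈ Lh h ↔ l.length = h := by
  simp only [Lh, Finset.mem_image, Finset.mem_univ, true_and]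
  constructor
  · rintro ⟨f, rfl⟩; simp
  · rintro rfl; exact ⟨l.get, List.ofFn_get l⟩

lemma card_Lh (h : ℕ) : (Lh h).card = 2 ^ h := by
  rw [Lh, Finset.card_image_of_injective _ List.ofFn_injective]
  simp

lemma finite_InjM (h : ℕ) (U : FiniteRootedTree) : (InjM h U).Finite := by
  have hfin : {l : List Bool | l.length ≤ h}.Finite := List.finite_length_le Bool h
  have : (InjM h U) ⊆ Set.pi Set.univ (fun _ : U.V => {l : List Bool | l.length ≤ h}) := by
    intro α hα u _
    exact hα.2.1 u
  exact Set.Finite.subset (Set.Finite.pi fun _ => hfin) this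

/-- any vertex mapped to a length-`h` list is a leaf -/
lemma isLeaf_of_len_eq {h : ℕ} {U : FiniteRootedTree} {α : U.V → List Bool}
    (hα : α ∈ InjM h U) {u : U.V} (hu : (α u).length = h) : U.IsLeaf u := by
  intro u' hu'
  obtain ⟨b, hb⟩ := hα.2.2.2 u u' hu'
  have := hα.2.1 u'
  rw [hb] at this
  simp [hu] at this

lemma card_range_leaves {h : ℕ} {U : FiniteRootedTree} {α : U.V → List Bool}
    (hα : α ∈ InjM h U) :
    ((Lh h).filter (fun l => l ∈ Set.range α)).card ≤ U.leaves.card := by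
  have : Nonempty U.V := ⟨U.root⟩
  apply Finset.card_le_card_of_injOn (fun l => Function.invFun α l)
  · intro l hl
    simp only [Finset.mem_coe, Finset.mem_filter] at hl
    have heq : α (Function.invFun α l) = l := Function.invFun_eq hl.2
    simp only [FiniteRootedTree.leaves, Finset.mem_coe, Finset.mem_filter, Finset.mem_univ, true_and]
    exact isLeaf_of_len_eq hα (by rw [heq]; exact mem_Lh.mp hl.1)
  · intro l hl l' hl' hll
    simp only [Finset.mem_coe, Finset.mem_filter] at hl hl'
    have h1 : α (Function.invFun α l) = l := Function.invFun_eq hl.2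
    have h2 : α (Function.invFun α l') = l' := Function.invFun_eq hl'.2
    rw [← h1, ← h2]
    exact congrArg α hll

/-- the xor-mask automorphism of `M_h`, postcomposed with `α` -/
def F {U : FiniteRootedTree} (c : List Bool) (α : U.V → List Bool) : U.V → List Bool :=
  fun u => List.zipWith xor (α u) c

lemma F_mem {h : ℕ} {U : FiniteRootedTree} {c : List Bool} (hc : c.length = h)
    {α : U.V → List Bool} (hα : α ∈ InjM h U) : F c α ∈ InjM h U := by
  obtain ⟨hinj, hlen, hroot, hchild⟩ := hα
  refine ⟨?_, ?_, ?_, ?_⟩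
  · intro u v huv
    have h2 := congrArg (fun m => List.zipWith xor m c) huv
    simp only [F] at h2
    rw [zip_xor_invol _ c (by rw [hc]; exact hlen u),
        zip_xor_invol _ c (by rw [hc]; exact hlen v)] at h2
    exact hinj h2
  · intro u
    rw [F, length_zip_xor _ _ (by rw [hc]; exact hlen u)]
    exact hlen u
  · simp [F, hroot]
  · intro u u' hu'
    obtain ⟨b, hb⟩ := hchild u u' hu'
    have hlt : (α u).length < c.length := by
      have := hlen u'
      rw [hb] at this
      simp only [List.length_append, List.length_cons, List.length_nil] at this
      omega
    obtain ⟨b', hb'⟩ := zip_xor_append (α u) c b hlt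
    exact ⟨b', by rw [F, F, hb, hb']⟩

lemma F_invol {h : ℕ} {U : FiniteRootedTree} {c : List Bool} (hc : c.length = h)
    {α : U.V → List Bool} (hα : α ∈ InjM h U) : F c (F c α) = α := by
  funext u
  exact zip_xor_invol (α u) c (by rw [hc]; exact hα.2.1 u)

lemma ncard_S_const {h : ℕ} {U : FiniteRootedTree} {l l' : List Bool}
    (hl : l.length = h) (hl' : l'.length = h) :
    {α : U.V → List Bool | α ∈ InjM h U ∧ l ∈ Set.range α}.ncard =
      {α : U.V → List Bool | α ∈ InjM h U ∧ l' ∈ Set.range α}.ncard := by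
  set c := List.zipWith xor l l' with hcdef
  have hc : c.length = h := by
    rw [hcdef, List.length_zipWith, hl, hl']; omega
  have hFl : List.zipWith xor l c = l' := zip_xor_self l l' (by omega)
  have hFl' : List.zipWith xor l' c = l := by
    rw [hcdef, List.zipWith_comm_of_comm (f := xor) (by decide) (l := l) (l' := l')]
    exact zip_xor_self l' l (by omega)
  have hmaps : ∀ (m m' : List Bool), List.zipWith xor m c = m' →
      F c '' {α : U.V → List Bool | α ∈ InjM h U ∧ m ∈ Set.range α} ⊆
        {α : U.V → List Bool | α ∈ InjM h U ∧ m' ∈ Set.range α} := by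
    rintro m m' hm _ ⟨α, ⟨hα, u, hu⟩, rfl⟩
    exact ⟨F_mem hc hα, u, by rw [F, hu, hm]⟩
  have himg : F c '' {α : U.V → List Bool | α ∈ InjM h U ∧ l ∈ Set.range α} =
      {α : U.V → List Bool | α ∈ InjM h U ∧ l' ∈ Set.range α} := by
    apply Set.Subset.antisymm (hmaps l l' hFl)
    intro β hβ
    refine ⟨F c β, hmaps l' l hFl' ⟨β, hβ, rfl⟩, F_invol hc hβ.1⟩
  rw [← himg]
  refine (Set.ncard_image_of_injOn ?_).symm
  intro α hα β hβ hαβ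
  rw [← F_invol hc hα.1, ← F_invol hc hβ.1, hαβ]

end Stmt3Aux

namespace Stmt3Aux

lemma filter_card_eq_ncard (h : ℕ) (U : FiniteRootedTree) (l : List Bool) :
    ((finite_InjM h U).toFinset.filter (fun α => l ∈ Set.range α)).card =
      {α : U.V → List Bool | α ∈ InjM h U ∧ l ∈ Set.range α}.ncard := by
  rw [← Set.ncard_coe_finset]
  congr 1
  ext α
  simp [Set.Finite.mem_toFinset]

lemma sum_N_le (h : ℕ) (U : FiniteRootedTree) :
    ∑ l ∈ Lh h, ((finite_InjM h U).toFinset.filter (fun α => l ∈ Set.range α)).card ≤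
      U.leaves.card * (finite_InjM h U).toFinset.card := by
  set A := (finite_InjM h U).toFinset with hA
  calc ∑ l ∈ Lh h, (A.filter fun α => l ∈ Set.range α).card
      = ∑ l ∈ Lh h, ∑ α ∈ A, if l ∈ Set.range α then 1 else 0 :=
        Finset.sum_congr rfl fun l _ => Finset.card_filter _ _
    _ = ∑ α ∈ A, ∑ l ∈ Lh h, if l ∈ Set.range α then 1 else 0 := Finset.sum_comm
    _ = ∑ α ∈ A, ((Lh h).filter fun l => l ∈ Set.range α).card :=
        Finset.sum_congr rfl fun α _ => (Finset.card_filter _ _).symm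
    _ ≤ ∑ _α ∈ A, U.leaves.card := by
        refine Finset.sum_le_sum fun α hα => ?_
        exact card_range_leaves ((Set.Finite.mem_toFinset _).mp hα)
    _ = U.leaves.card * A.card := by rw [Finset.sum_const, smul_eq_mul, mul_comm]

lemma pow_mul_N_le (h : ℕ) (U : FiniteRootedTree) {l : List Bool} (hl : l ∈ Lh h) :
    2 ^ h * ((finite_InjM h U).toFinset.filter (fun α => l ∈ Set.range α)).card ≤
      U.leaves.card * (finite_InjM h U).toFinset.card := by
  have hconst : ∀ l' ∈ Lh h,
      ((finite_InjM h U).toFinset.filter (fun α => l' ∈ Set.range α)).card =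
      ((finite_InjM h U).toFinset.filter (fun α => l ∈ Set.range α)).card := by
    intro l' hl'
    rw [filter_card_eq_ncard, filter_card_eq_ncard]
    exact ncard_S_const (mem_Lh.mp hl') (mem_Lh.mp hl)
  have : ∑ l' ∈ Lh h, ((finite_InjM h U).toFinset.filter (fun α => l' ∈ Set.range α)).card =
      2 ^ h * ((finite_InjM h U).toFinset.filter (fun α => l ∈ Set.range α)).card := by
    rw [Finset.sum_congr rfl hconst, Finset.sum_const, smul_eq_mul, card_Lh]
  rw [← this]
  exact sum_N_le h U

end Stmt3Aux

/-- the probability that two independent uniform injective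
homomorphisms into `M_h` share a leaf of `M_h` in their images is at most
`a·b/2^h`. -/
theorem stmt_3 (h : ℕ) (U₁ U₂ : FiniteRootedTree) :
    2 ^ h * Set.ncard {p : (U₁.V → List Bool) × (U₂.V → List Bool) |
        p.1 ∈ InjM h U₁ ∧ p.2 ∈ InjM h U₂ ∧
        ∃ l : List Bool, l.length = h ∧ l ∈ Set.range p.1 ∧ l ∈ Set.range p.2} ≤
      U₁.leaves.card * U₂.leaves.card * (InjM h U₁).ncard * (InjM h U₂).ncard := by
  classical
  have hf1 := Stmt3Aux.finite_InjM h U₁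
  have hf2 := Stmt3Aux.finite_InjM h U₂
  set A₁ := hf1.toFinset with hA₁
  set A₂ := hf2.toFinset with hA₂
  set S := {p : (U₁.V → List Bool) × (U₂.V → List Bool) |
        p.1 ∈ InjM h U₁ ∧ p.2 ∈ InjM h U₂ ∧
        ∃ l : List Bool, l.length = h ∧ l ∈ Set.range p.1 ∧ l ∈ Set.range p.2} with hSdef
  have hSfin : S.Finite := by
    refine Set.Finite.subset (hf1.prod hf2) ?_
    rintro ⟨p1, p2⟩ ⟨h1, h2, -⟩
    exact ⟨h1, h2⟩
  set N₁ : List Bool → ℕ := fun l => (A₁.filter (fun α => l ∈ Set.range α)).card with hN₁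
  set N₂ : List Bool → ℕ := fun l => (A₂.filter (fun α => l ∈ Set.range α)).card with hN₂
  have hsub : hSfin.toFinset ⊆ (Stmt3Aux.Lh h).biUnion
      (fun l => (A₁.filter (fun α => l ∈ Set.range α)) ×ˢ
        (A₂.filter (fun α => l ∈ Set.range α))) := by
    intro p hp
    rw [Set.Finite.mem_toFinset] at hp
    obtain ⟨h1, h2, l, hl, hr1, hr2⟩ := hp
    refine Finset.mem_biUnion.mpr ⟨l, Stmt3Aux.mem_Lh.mpr hl, ?_⟩
    rw [Finset.mem_product]
    exact ⟨Finset.mem_filter.mpr ⟨(Set.Finite.mem_toFinset _).mpr h1, hr1⟩,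
      Finset.mem_filter.mpr ⟨(Set.Finite.mem_toFinset _).mpr h2, hr2⟩⟩
  have hS1 : S.ncard ≤ ∑ l ∈ Stmt3Aux.Lh h, N₁ l * N₂ l := by
    rw [Set.ncard_eq_toFinset_card S hSfin]
    calc hSfin.toFinset.card ≤ _ := Finset.card_le_card hsub
      _ ≤ ∑ l ∈ Stmt3Aux.Lh h, ((A₁.filter (fun α => l ∈ Set.range α)) ×ˢ
            (A₂.filter (fun α => l ∈ Set.range α))).card := Finset.card_biUnion_le
      _ = ∑ l ∈ Stmt3Aux.Lh h, N₁ l * N₂ l := by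
          simp [Finset.card_product, hN₁, hN₂]
  calc 2 ^ h * S.ncard ≤ 2 ^ h * ∑ l ∈ Stmt3Aux.Lh h, N₁ l * N₂ l :=
        Nat.mul_le_mul_left _ hS1
    _ = ∑ l ∈ Stmt3Aux.Lh h, (2 ^ h * N₁ l) * N₂ l := by
        rw [Finset.mul_sum]; congr 1; ext l; ring
    _ ≤ ∑ l ∈ Stmt3Aux.Lh h, (U₁.leaves.card * A₁.card) * N₂ l := by
        refine Finset.sum_le_sum fun l hl => ?_
        exact Nat.mul_le_mul_right _ (Stmt3Aux.pow_mul_N_le h U₁ hl)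
    _ = (U₁.leaves.card * A₁.card) * ∑ l ∈ Stmt3Aux.Lh h, N₂ l := by
        rw [Finset.mul_sum]
    _ ≤ (U₁.leaves.card * A₁.card) * (U₂.leaves.card * A₂.card) :=
        Nat.mul_le_mul_left _ (Stmt3Aux.sum_N_le h U₂)
    _ = U₁.leaves.card * U₂.leaves.card * (InjM h U₁).ncard * (InjM h U₂).ncard := by
        rw [Set.ncard_eq_toFinset_card _ hf1, Set.ncard_eq_toFinset_card _ hf2]
        ring
end

section
/- Let h be a natural number and let U₁ and U₂ be finite rooted trees with a and b leaves respectively. Then 2^h · Σ_{(α₁, α₂) ∈ Inj(U₁, M_h) × Inj(U₂, M_h)} |{ℓ : ℓ is a Boolean list of length h with ℓ ∈ α₁(V(U₁)) ∩ α₂(V(U₂))}| ≤ a · b · |Inj(U₁, M_h)| · |Inj(U₂, M_h)|. Equivalently, for α₁ and α₂ chosen independently and uniformly at random (when both sets are nonempty), the expected number of leaves of M_h lying in both images is at most a·b/2^h. -/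
attribute [local instance] Classical.propDecidable

/- ### Auxiliary lemmas -/


lemma xor_cancel' : ∀ (m d : List Bool), m.length ≤ d.length →
    List.zipWith xor (List.zipWith xor m d) d = m
  | [], _, _ => by simp
  | a :: m, c :: d, hl => by
    have h1 : xor (xor a c) c = a := by cases a <;> cases c <;> rfl
    have h2 := xor_cancel' m d (by simpa using Nat.succ_le_succ_iff.mp (by simpa using hl))
    simp [List.zipWith, h1, h2]
  | _ :: _, [], hl => by simp at hl

lemma list_xor_cancel_left : ∀ (l l' : List Bool), l.length = l'.length →
    List.zipWith xor l (List.zipWith xor l l') = l'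
  | [], [], _ => rfl
  | a :: l, c :: l', hl => by
    have h1 : xor a (xor a c) = c := by cases a <;> cases c <;> rfl
    have h2 := list_xor_cancel_left l l' (by simpa using hl)
    simp [List.zipWith, h1, h2]
  | [], _ :: _, hl => by simp at hl
  | _ :: _, [], hl => by simp at hl

lemma list_xor_cancel_right : ∀ (l l' : List Bool), l.length = l'.length →
    List.zipWith xor l' (List.zipWith xor l l') = l
  | [], [], _ => rfl
  | a :: l, c :: l', hl => by
    have h1 : xor c (xor a c) = a := by cases a <;> cases c <;> rfl
    have h2 := list_xor_cancel_right l l' (by simpa using hl)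
    simp [List.zipWith, h1, h2]
  | [], _ :: _, hl => by simp at hl
  | _ :: _, [], hl => by simp at hl

lemma xor_append : ∀ (m d : List Bool) (b : Bool), m.length < d.length →
    ∃ b', List.zipWith xor (m ++ [b]) d = List.zipWith xor m d ++ [b']
  | [], c :: d, b, _ => ⟨xor b c, by simp [List.zipWith]⟩
  | a :: m, c :: d, b, hl => by
    obtain ⟨b', hb'⟩ := xor_append m d b (by simpa using Nat.lt_of_succ_lt_succ hl)
    exact ⟨b', by simp [List.zipWith, hb']⟩
  | _, [], _, hl => by simp at hl

variable {U : FiniteRootedTree}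

lemma depth_iterate (U : FiniteRootedTree) (v : U.V) :
    ∀ k, k ≤ U.depth v → U.depth (U.parent^[k] v) = U.depth v - k := by
  intro k
  induction k with
  | zero => simp
  | succ k ih =>
    intro hk
    have h1 := ih (by omega)
    have hne : U.parent^[k] v ≠ U.root := by
      intro hr
      rw [hr, U.depth_root] at h1
      omega
    have h2 := U.depth_parent _ hne
    rw [Function.iterate_succ_apply']
    omega

lemma depth_lt_card (U : FiniteRootedTree) (v : U.V) : U.depth v < Fintype.card U.V := by
  have hinj : Function.Injective (fun k : Fin (U.depth v + 1) => U.parent^[k.val] v) := by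
    intro k k' hkk
    have h1 := depth_iterate U v k.val (by omega)
    have h2 := depth_iterate U v k'.val (by omega)
    simp only at hkk
    rw [hkk] at h1
    have hk := k.2; have hk' := k'.2
    ext; omega
  have := Fintype.card_le_of_injective _ hinj
  simpa using this

lemma exists_leaf_above (U : FiniteRootedTree) (u : U.V) :
    ∃ w k, U.IsLeaf w ∧ U.parent^[k] w = u ∧ U.depth w = U.depth u + k := by
  suffices H : ∀ m u, Fintype.card U.V - U.depth u ≤ m →
      ∃ w k, U.IsLeaf w ∧ U.parent^[k] w = u ∧ U.depth w = U.depth u + k by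
    exact H (Fintype.card U.V) u (by omega)
  intro m
  induction m with
  | zero => intro u hu; have := depth_lt_card U u; omega
  | succ m ih =>
    intro u hu
    by_cases hleaf : U.IsLeaf u
    · exact ⟨u, 0, hleaf, rfl, by simp⟩
    · simp only [FiniteRootedTree.IsLeaf, not_forall, not_not] at hleaf
      obtain ⟨u', hu'⟩ := hleaf
      have hd : U.depth u' = U.depth u + 1 := by
        have := U.depth_parent u' hu'.1
        rw [hu'.2] at this; exact this
      have hlt := depth_lt_card U u'
      obtain ⟨w, k, hw, hpar, hdep⟩ := ih u' (by omega)
      refine ⟨w, k + 1, hw, ?_, by omega⟩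
      rw [Function.iterate_succ_apply', hpar, hu'.2]

lemma card_depth_le_leaves (U : FiniteRootedTree) (n : ℕ) :
    (Finset.univ.filter fun u : U.V => U.depth u = n).card ≤ U.leaves.card := by
  choose w k hleaf hpar hdep using exists_leaf_above U
  apply Finset.card_le_card_of_injOn w
  · intro u _
    simp [FiniteRootedTree.leaves, hleaf u]
  · intro u hu u' hu' heq
    simp only [Finset.coe_filter, Set.mem_setOf_eq, Finset.mem_univ, true_and] at hu hu'
    have h1 := hdep u
    have h2 := hdep u'
    have hk : k u = k u' := by rw [heq] at h1; rw [h1] at h2; omega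
    rw [← hpar u, ← hpar u', heq, hk]


section InjMLemmas
variable {h : ℕ} {U : FiniteRootedTree}

lemma length_eq_depth {α : U.V → List Bool} (hα : α ∈ InjM h U) (u : U.V) :
    (α u).length = U.depth u := by
  obtain ⟨hinj, hlen, hroot, hchild⟩ := hα
  suffices H : ∀ n u, U.depth u = n → (α u).length = n from H _ u rfl
  intro n
  induction n using Nat.strong_induction_on with
  | _ n ih =>
    intro u hu
    by_cases hr : u = U.root
    · subst hr
      rw [hroot]
      rw [U.depth_root] at hu
      simp [← hu]
    · have hd := U.depth_parent u hr
      obtain ⟨b, hb⟩ := hchild (U.parent u) u ⟨hr, rfl⟩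
      have hih := ih (U.depth (U.parent u)) (by omega) (U.parent u) rfl
      rw [hb, List.length_append, hih]
      simp; omega

lemma injM_finite (h : ℕ) (U : FiniteRootedTree) : (InjM h U).Finite := by
  have hfin : {l : List Bool | l.length ≤ h}.Finite := List.finite_length_le Bool h
  apply Set.Finite.subset (Set.Finite.pi fun _ : U.V => hfin)
  intro α hα
  simp only [Set.mem_pi, Set.mem_univ, Set.mem_setOf_eq, forall_true_left]
  exact fun u => hα.2.1 u

lemma mem_InjM_comp {d : List Bool} (hd : d.length = h) {α : U.V → List Bool}
    (hα : α ∈ InjM h U) : (fun u => List.zipWith xor (α u) d) ∈ InjM h U := by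
  obtain ⟨hinj, hlen, hroot, hchild⟩ := hα
  refine ⟨?_, ?_, ?_, ?_⟩
  · intro u u' huu
    apply hinj
    have h1 := xor_cancel' (α u) d (by rw [hd]; exact hlen u)
    have h2 := xor_cancel' (α u') d (by rw [hd]; exact hlen u')
    simp only at huu
    rw [← h1, ← h2, huu]
  · intro u
    simp only [List.length_zipWith]
    omega
  · simp [hroot]
  · intro u u' hc
    obtain ⟨b, hb⟩ := hchild u u' hc
    have hlt : (α u).length < d.length := by
      have := hlen u'
      rw [hb, List.length_append] at this
      simp at this; omega
    obtain ⟨b', hb'⟩ := xor_append (α u) d b hlt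
    exact ⟨b', by show List.zipWith xor (α u') d = List.zipWith xor (α u) d ++ [b']
                  rw [hb, hb']⟩

/-- Constancy of the number of embeddings hitting a given leaf. -/
lemma N_const (l l' : List Bool) (hl : l.length = h) (hl' : l'.length = h) :
    ((injM_finite h U).toFinset.filter fun α => l ∈ Set.range α).card =
    ((injM_finite h U).toFinset.filter fun α => l' ∈ Set.range α).card := by
  set d : List Bool := List.zipWith xor l l' with hd_def
  have hd : d.length = h := by simp [hd_def, List.length_zipWith]; omega
  have hll' : l.length = l'.length := by omega
  refine Finset.card_bij' (fun α _ => fun u => List.zipWith xor (α u) d)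
    (fun α _ => fun u => List.zipWith xor (α u) d) ?_ ?_ ?_ ?_
  · intro α hα
    simp only [Finset.mem_filter, Set.Finite.mem_toFinset] at hα ⊢
    obtain ⟨hmem, u, hu⟩ := hα
    refine ⟨mem_InjM_comp hd hmem, u, ?_⟩
    show List.zipWith xor (α u) d = l'
    rw [hu, hd_def, list_xor_cancel_left l l' hll']
  · intro α hα
    simp only [Finset.mem_filter, Set.Finite.mem_toFinset] at hα ⊢
    obtain ⟨hmem, u, hu⟩ := hα
    refine ⟨mem_InjM_comp hd hmem, u, ?_⟩
    show List.zipWith xor (α u) d = l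
    rw [hu, hd_def, list_xor_cancel_right l l' hll']
  · intro α hα
    simp only [Finset.mem_filter, Set.Finite.mem_toFinset] at hα
    funext u
    exact xor_cancel' (α u) d (by rw [hd]; exact hα.1.2.1 u)
  · intro α hα
    simp only [Finset.mem_filter, Set.Finite.mem_toFinset] at hα
    funext u
    exact xor_cancel' (α u) d (by rw [hd]; exact hα.1.2.1 u)

end InjMLemmas

section Main
variable {h : ℕ}

/-- finset of leaves of M_h -/
noncomputable def LF (h : ℕ) : Finset (List Bool) :=
  (List.finite_length_eq Bool h).toFinset

lemma mem_LF {l : List Bool} : l ∈ LF h ↔ l.length = h := by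
  simp [LF, Set.Finite.mem_toFinset]

lemma card_LF : (LF h).card = 2 ^ h := by
  have h1 : {l : List Bool | l.length = h}.ncard = (LF h).card :=
    Set.ncard_eq_toFinset_card _ (List.finite_length_eq Bool h)
  rw [← h1, ← Nat.card_coe_set_eq]
  have e : {l : List Bool | l.length = h} ≃ List.Vector Bool h := Equiv.refl _
  rw [Nat.card_congr e, Nat.card_eq_fintype_card, card_vector]
  simp

noncomputable def Ncnt (h : ℕ) (U : FiniteRootedTree) (l : List Bool) : ℕ :=
  ((injM_finite h U).toFinset.filter fun α => l ∈ Set.range α).card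

lemma Ncnt_eq_sum {U : FiniteRootedTree} (l : List Bool) :
    Ncnt h U l = ∑ α ∈ (injM_finite h U).toFinset, if l ∈ Set.range α then 1 else 0 :=
  Finset.card_filter _ _

lemma filter_range_eq {U : FiniteRootedTree} {α : U.V → List Bool} (hα : α ∈ InjM h U) :
    (LF h).filter (fun l => l ∈ Set.range α) =
      (Finset.univ.filter fun u : U.V => U.depth u = h).image α := by
  ext l
  simp only [Finset.mem_filter, mem_LF, Finset.mem_image, Finset.mem_univ, true_and,
    Set.mem_range]
  constructor
  · rintro ⟨hlen, u, rfl⟩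
    exact ⟨u, by rw [← length_eq_depth hα u]; exact hlen, rfl⟩
  · rintro ⟨u, hu, rfl⟩
    exact ⟨by rw [length_eq_depth hα u]; exact hu, u, rfl⟩

lemma sum_Ncnt_le (U : FiniteRootedTree) :
    ∑ l ∈ LF h, Ncnt h U l ≤ U.leaves.card * (InjM h U).ncard := by
  have hswap : ∑ l ∈ LF h, Ncnt h U l =
      ∑ α ∈ (injM_finite h U).toFinset, ((LF h).filter fun l => l ∈ Set.range α).card := by
    simp only [Ncnt, Finset.card_filter]
    rw [Finset.sum_comm]
  rw [hswap, Set.ncard_eq_toFinset_card _ (injM_finite h U)]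
  calc ∑ α ∈ (injM_finite h U).toFinset, ((LF h).filter fun l => l ∈ Set.range α).card
      ≤ ∑ _α ∈ (injM_finite h U).toFinset, U.leaves.card := by
        apply Finset.sum_le_sum
        intro α hα
        rw [Set.Finite.mem_toFinset] at hα
        rw [filter_range_eq hα]
        calc ((Finset.univ.filter fun u : U.V => U.depth u = h).image α).card
            ≤ (Finset.univ.filter fun u : U.V => U.depth u = h).card :=
              Finset.card_image_le
          _ ≤ U.leaves.card := card_depth_le_leaves U h
    _ = U.leaves.card * ((injM_finite h U).toFinset).card := by
        rw [Finset.sum_const, smul_eq_mul, mul_comm]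

/-- the expected number of leaves of `M_h` lying in both images of
two independent uniform injective homomorphisms is at most `a·b/2^h`. -/
theorem stmt_4 (h : ℕ) (U₁ U₂ : FiniteRootedTree) :
    2 ^ h * (∑ᶠ α₁ ∈ InjM h U₁, ∑ᶠ α₂ ∈ InjM h U₂,
        Set.ncard {l : List Bool | l.length = h ∧
          l ∈ Set.range α₁ ∧ l ∈ Set.range α₂}) ≤
      U₁.leaves.card * U₂.leaves.card * (InjM h U₁).ncard * (InjM h U₂).ncard := by
  classical
  set S₁ := (injM_finite h U₁).toFinset with hS₁
  set S₂ := (injM_finite h U₂).toFinset with hS₂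
  -- step 1: finsum to finset sums
  have e1 : (∑ᶠ α₁ ∈ InjM h U₁, ∑ᶠ α₂ ∈ InjM h U₂,
        Set.ncard {l : List Bool | l.length = h ∧ l ∈ Set.range α₁ ∧ l ∈ Set.range α₂})
      = ∑ α₁ ∈ S₁, ∑ α₂ ∈ S₂,
        Set.ncard {l : List Bool | l.length = h ∧ l ∈ Set.range α₁ ∧ l ∈ Set.range α₂} := by
    rw [finsum_mem_eq_finite_toFinset_sum _ (injM_finite h U₁)]
    exact Finset.sum_congr rfl fun α₁ _ =>
      finsum_mem_eq_finite_toFinset_sum _ (injM_finite h U₂)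
  -- step 2: each ncard as a filter card over LF
  have e2 : ∀ (α₁ : U₁.V → List Bool) (α₂ : U₂.V → List Bool),
      Set.ncard {l : List Bool | l.length = h ∧ l ∈ Set.range α₁ ∧ l ∈ Set.range α₂}
      = ∑ l ∈ LF h, ((if l ∈ Set.range α₁ then 1 else 0) *
          (if l ∈ Set.range α₂ then 1 else 0)) := by
    intro α₁ α₂
    have hset : {l : List Bool | l.length = h ∧ l ∈ Set.range α₁ ∧ l ∈ Set.range α₂}
        = ↑((LF h).filter fun l => l ∈ Set.range α₁ ∧ l ∈ Set.range α₂) := by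
      ext l; simp [mem_LF, and_assoc]
    rw [hset, Set.ncard_coe_finset, Finset.card_filter]
    refine Finset.sum_congr rfl fun l _ => ?_
    by_cases h1 : l ∈ Set.range α₁ <;> by_cases h2 : l ∈ Set.range α₂ <;> simp [h1, h2]
  -- step 3: swap sums
  have e3 : (∑ α₁ ∈ S₁, ∑ α₂ ∈ S₂,
        Set.ncard {l : List Bool | l.length = h ∧ l ∈ Set.range α₁ ∧ l ∈ Set.range α₂})
      = ∑ l ∈ LF h, Ncnt h U₁ l * Ncnt h U₂ l := by
    simp only [e2]
    rw [Finset.sum_comm]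
    calc ∑ α₂ ∈ S₂, ∑ α₁ ∈ S₁, ∑ l ∈ LF h,
          ((if l ∈ Set.range α₁ then 1 else 0) * (if l ∈ Set.range α₂ then 1 else 0))
        = ∑ α₂ ∈ S₂, ∑ l ∈ LF h, ∑ α₁ ∈ S₁,
          ((if l ∈ Set.range α₁ then 1 else 0) * (if l ∈ Set.range α₂ then 1 else 0)) := by
          exact Finset.sum_congr rfl fun α₂ _ => Finset.sum_comm
      _ = ∑ l ∈ LF h, ∑ α₂ ∈ S₂, ∑ α₁ ∈ S₁,
          ((if l ∈ Set.range α₁ then 1 else 0) * (if l ∈ Set.range α₂ then 1 else 0)) :=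
          Finset.sum_comm
      _ = ∑ l ∈ LF h, Ncnt h U₁ l * Ncnt h U₂ l := by
          refine Finset.sum_congr rfl fun l _ => ?_
          rw [Ncnt_eq_sum, Ncnt_eq_sum, Finset.sum_mul_sum, Finset.sum_comm]
  -- step 4: constancy
  set l₀ : List Bool := List.replicate h false with hl₀
  have hl₀len : l₀.length = h := by simp [hl₀]
  have c1 : ∀ l ∈ LF h, Ncnt h U₁ l = Ncnt h U₁ l₀ :=
    fun l hl => N_const l l₀ (mem_LF.mp hl) hl₀len
  have c2 : ∀ l ∈ LF h, Ncnt h U₂ l = Ncnt h U₂ l₀ :=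
    fun l hl => N_const l l₀ (mem_LF.mp hl) hl₀len
  have e4 : ∑ l ∈ LF h, Ncnt h U₁ l * Ncnt h U₂ l
      = 2 ^ h * (Ncnt h U₁ l₀ * Ncnt h U₂ l₀) := by
    rw [Finset.sum_congr rfl fun l hl => by rw [c1 l hl, c2 l hl]]
    rw [Finset.sum_const, smul_eq_mul, card_LF]
  have e5 : ∀ (U : FiniteRootedTree), ∑ l ∈ LF h, Ncnt h U l = 2 ^ h * Ncnt h U l₀ := by
    intro U
    have c : ∀ l ∈ LF h, Ncnt h U l = Ncnt h U l₀ :=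
      fun l hl => N_const l l₀ (mem_LF.mp hl) hl₀len
    rw [Finset.sum_congr rfl c, Finset.sum_const, smul_eq_mul, card_LF]
  have key1 := sum_Ncnt_le (h := h) U₁
  have key2 := sum_Ncnt_le (h := h) U₂
  rw [e5 U₁] at key1
  rw [e5 U₂] at key2
  rw [e1, e3, e4]
  calc 2 ^ h * (2 ^ h * (Ncnt h U₁ l₀ * Ncnt h U₂ l₀))
      = (2 ^ h * Ncnt h U₁ l₀) * (2 ^ h * Ncnt h U₂ l₀) := by ring
    _ ≤ (U₁.leaves.card * (InjM h U₁).ncard) * (U₂.leaves.card * (InjM h U₂).ncard) :=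
        Nat.mul_le_mul key1 key2
    _ = U₁.leaves.card * U₂.leaves.card * (InjM h U₁).ncard * (InjM h U₂).ncard := by ring

end Main
end
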